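/- arXiv:1606.07508 — 6 statements merged into one kernel-verified Lean document; each statement's English description precedes it below -/
import Mathlib

section
/- Let α : ℝ≥0 → ℝ≥0 be positive definite, and let ρ₁ be a locally Lipschitz class-K∞ function and ρ₂ a class-L function such that α(r) ≥ ρ₁(r)·ρ₂(r) for all r ≥ 0. Let β(r,τ) denote the maximal solution of the scalar ODE dy/dτ = −ρ₁(y) with initial condition y(0) = r, so that β(r,0) = r. Then β is a class-KL function, and for every absolutely continuous function w : [t₀, t̃) → ℝ≥0 (with t̃ > t₀ ≥ 0) satisfying ẇ(t) ≤ −α(w(t)) for almost every t, one has w(t) ≤ β(w(t₀), ρ₂(w(t₀))·(t − t₀)) for all t ∈ [t₀, t̃). -/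
def PosDefFun (f : ℝ → ℝ) : Prop :=
  ContinuousOn f (Set.Ici 0) ∧ f 0 = 0 ∧ ∀ s > 0, 0 < f s

def ClassK (f : ℝ → ℝ) : Prop :=
  PosDefFun f ∧ StrictMonoOn f (Set.Ici 0)

def ClassKInf (f : ℝ → ℝ) : Prop :=
  ClassK f ∧ Filter.Tendsto f Filter.atTop Filter.atTop

def ClassL (f : ℝ → ℝ) : Prop :=
  ContinuousOn f (Set.Ici 0) ∧ AntitoneOn f (Set.Ici 0) ∧
    (∀ s ≥ 0, 0 ≤ f s) ∧ Filter.Tendsto f Filter.atTop (nhds 0)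

def ClassKL (β : ℝ → ℝ → ℝ) : Prop :=
  (∀ s ≥ 0, ClassK (fun r => β r s)) ∧ (∀ r ≥ 0, ClassL (β r))

open Set Filter MeasureTheory Metric intervalIntegral Real

lemma locLip_lipschitzOn_Icc {f : ℝ → ℝ} (hf : LocallyLipschitz f) (a b : ℝ) :
    ∃ K : NNReal, LipschitzOnWith K f (Set.Icc a b) := by
  choose K t ht hK using hf
  obtain ⟨F, hF⟩ := isCompact_Icc.elim_finite_subcover (fun x : ℝ => interior (t x))
    (fun x => isOpen_interior)
    (fun x _ => mem_iUnion.2 ⟨x, mem_interior_iff_mem_nhds.2 (ht x)⟩)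
  obtain ⟨δ, hδ, hball⟩ := lebesgue_number_lemma_of_metric (s := Icc a b)
    (c := fun i : F => interior (t i.1)) isCompact_Icc (fun i => isOpen_interior)
    (by intro x hx; obtain ⟨i, hi⟩ := mem_iUnion.1 (hF hx)
        simp only [mem_iUnion, exists_prop] at hi
        exact mem_iUnion.2 ⟨⟨i, hi.1⟩, hi.2⟩)
  set K₀ : NNReal := F.sup K with hK₀
  have single : ∀ x ∈ Icc a b, ∀ y ∈ Icc a b, x ≤ y → y - x < δ →
      dist (f x) (f y) ≤ (K₀ : ℝ) * (y - x) := by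
    intro x hx y hy hxy hlt
    obtain ⟨i, hi⟩ := hball x hx
    have hxt : x ∈ t i.1 := interior_subset (hi (mem_ball_self hδ))
    have hyt : y ∈ t i.1 := interior_subset (hi (by
      rw [mem_ball, Real.dist_eq, abs_of_nonneg (by linarith)]; linarith))
    have := (hK i.1).dist_le_mul x hxt y hyt
    have hle : (K i.1 : ℝ) ≤ (K₀ : ℝ) := by
      exact_mod_cast Finset.le_sup i.2
    have hd : dist x y = y - x := by
      rw [Real.dist_eq, abs_of_nonpos (by linarith : x - y ≤ 0)]; ring
    calc dist (f x) (f y) ≤ (K i.1 : ℝ) * dist x y := this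
      _ ≤ (K₀ : ℝ) * (y - x) := by
          rw [hd]; exact mul_le_mul_of_nonneg_right hle (by linarith)
  have key : ∀ n : ℕ, ∀ x ∈ Icc a b, ∀ y ∈ Icc a b, x ≤ y → y - x ≤ n * (δ / 2) →
      dist (f x) (f y) ≤ (K₀ : ℝ) * (y - x) := by
    intro n
    induction n with
    | zero => intro x hx y hy hxy hle
              have : y = x := le_antisymm (by simpa using hle) hxy
              simp [this]
    | succ n ih =>
        intro x hx y hy hxy hle
        by_cases h : y - x ≤ δ / 2
        · exact single x hx y hy hxy (by linarith)
        · set m := x + δ / 2 with hm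
          have hmx : m ∈ Icc a b := ⟨by simp only [hm]; linarith [hx.1], by simp only [hm]; linarith [hy.2]⟩
          have h1 : dist (f x) (f m) ≤ (K₀ : ℝ) * (m - x) :=
            single x hx m hmx (by simp only [hm]; linarith) (by simp only [hm]; linarith)
          have h2 : dist (f m) (f y) ≤ (K₀ : ℝ) * (y - m) := by
            apply ih m hmx y hy (by simp only [hm]; linarith)
            push_cast [Nat.cast_succ] at hle ⊢
            simp only [hm]; linarith
          calc dist (f x) (f y) ≤ dist (f x) (f m) + dist (f m) (f y) := dist_triangle _ _ _
            _ ≤ (K₀ : ℝ) * (m - x) + (K₀ : ℝ) * (y - m) := add_le_add h1 h2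
            _ = (K₀ : ℝ) * (y - x) := by ring
  refine ⟨K₀, LipschitzOnWith.of_dist_le_mul ?_⟩
  intro x hx y hy
  wlog hxy : x ≤ y generalizing x y
  · rw [dist_comm, dist_comm x y]; exact this y hy x hx (le_of_not_ge hxy)
  obtain ⟨n, hn⟩ := exists_nat_ge ((y - x) / (δ / 2))
  have hd : dist x y = y - x := by
    rw [Real.dist_eq, abs_of_nonpos (by linarith : x - y ≤ 0)]; ring
  rw [hd]
  exact key n x hx y hy hxy (by rw [div_le_iff₀ (by linarith)] at hn; linarith)

/-- forward uniqueness for `y' = -ρ₁ y` -/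
lemma ode_eq_right {ρ₁ : ℝ → ℝ} (hlip : LocallyLipschitz ρ₁) {y z : ℝ → ℝ} {a b : ℝ}
    (hy : ContinuousOn y (Set.Icc a b))
    (hy' : ∀ t ∈ Set.Ico a b, HasDerivWithinAt y (-(ρ₁ (y t))) (Set.Ici t) t)
    (hz : ContinuousOn z (Set.Icc a b))
    (hz' : ∀ t ∈ Set.Ico a b, HasDerivWithinAt z (-(ρ₁ (z t))) (Set.Ici t) t)
    (heq : y a = z a) : Set.EqOn y z (Set.Icc a b) := by
  obtain ⟨C₁, hC₁⟩ := isCompact_Icc.exists_bound_of_continuousOn hy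
  obtain ⟨C₂, hC₂⟩ := isCompact_Icc.exists_bound_of_continuousOn hz
  set M := max C₁ C₂ with hM
  obtain ⟨K, hK⟩ := locLip_lipschitzOn_Icc hlip (-M) M
  have hv : ∀ t : ℝ, LipschitzOnWith K (fun x => -(ρ₁ x)) (Set.Icc (-M) M) := by
    intro t
    rw [show K = 1 * K from (one_mul K).symm]
    exact LipschitzWith.id.neg.comp_lipschitzOnWith hK
  have hmem : ∀ (f : ℝ → ℝ) C, (∀ x ∈ Set.Icc a b, ‖f x‖ ≤ C) → C ≤ M →
      ∀ t ∈ Set.Ico a b, f t ∈ Set.Icc (-M) M := by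
    intro f C hf hCM t ht
    have := (hf t (Set.Ico_subset_Icc_self ht)).trans hCM
    rw [Real.norm_eq_abs, abs_le] at this
    exact this
  exact ODE_solution_unique_of_mem_Icc_right (v := fun _ x => -(ρ₁ x))
    (s := fun _ => Set.Icc (-M) M) (fun t _ => hv t) hy hy'
    (hmem y C₁ hC₁ (le_max_left _ _)) hz hz' (hmem z C₂ hC₂ (le_max_right _ _)) heq

/-- backward uniqueness for `y' = -ρ₁ y` -/
lemma ode_eq_left {ρ₁ : ℝ → ℝ} (hlip : LocallyLipschitz ρ₁) {y z : ℝ → ℝ} {a b : ℝ}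
    (hy : ContinuousOn y (Set.Icc a b))
    (hy' : ∀ t ∈ Set.Ioc a b, HasDerivWithinAt y (-(ρ₁ (y t))) (Set.Iic t) t)
    (hz : ContinuousOn z (Set.Icc a b))
    (hz' : ∀ t ∈ Set.Ioc a b, HasDerivWithinAt z (-(ρ₁ (z t))) (Set.Iic t) t)
    (heq : y b = z b) : Set.EqOn y z (Set.Icc a b) := by
  obtain ⟨C₁, hC₁⟩ := isCompact_Icc.exists_bound_of_continuousOn hy
  obtain ⟨C₂, hC₂⟩ := isCompact_Icc.exists_bound_of_continuousOn hz
  set M := max C₁ C₂ with hM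
  obtain ⟨K, hK⟩ := locLip_lipschitzOn_Icc hlip (-M) M
  have hv : ∀ t : ℝ, LipschitzOnWith K (fun x => -(ρ₁ x)) (Set.Icc (-M) M) := by
    intro t
    rw [show K = 1 * K from (one_mul K).symm]
    exact LipschitzWith.id.neg.comp_lipschitzOnWith hK
  have hmem : ∀ (f : ℝ → ℝ) C, (∀ x ∈ Set.Icc a b, ‖f x‖ ≤ C) → C ≤ M →
      ∀ t ∈ Set.Ioc a b, f t ∈ Set.Icc (-M) M := by
    intro f C hf hCM t ht
    have := (hf t (Set.Ioc_subset_Icc_self ht)).trans hCM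
    rw [Real.norm_eq_abs, abs_le] at this
    exact this
  exact ODE_solution_unique_of_mem_Icc_left (v := fun _ x => -(ρ₁ x))
    (s := fun _ => Set.Icc (-M) M) (fun t _ => hv t) hy hy'
    (hmem y C₁ hC₁ (le_max_left _ _)) hz hz' (hmem z C₂ hC₂ (le_max_right _ _)) heq

/-- Comparison lemma along flows (Lemma B.1 / Lemma `L:8` of the paper):
if `α` is positive definite with `α ≥ ρ₁ · ρ₂` for a locally Lipschitz class-K∞ function `ρ₁`
and a class-L function `ρ₂`, and `β (r, ·)` is the (maximal) solution of `dy/dτ = -ρ₁ (y)`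
with `β r 0 = r`, then `β` is class-KL, and any nonnegative locally absolutely continuous
function `w` on `[t₀, tEnd)` (encoded via an a.e. derivative `w'` and the integral identity)
satisfying `ẇ(t) ≤ -α (w t)` a.e. obeys `w t ≤ β (w t₀) (ρ₂ (w t₀) * (t - t₀))`. -/
theorem comparison_flow (α ρ₁ ρ₂ : ℝ → ℝ) (β : ℝ → ℝ → ℝ)
    (hα : PosDefFun α)
    (hρ₁ : ClassKInf ρ₁) (hρ₁lip : LocallyLipschitz ρ₁) (hρ₂ : ClassL ρ₂)
    (hdom : ∀ r ≥ 0, ρ₁ r * ρ₂ r ≤ α r)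
    (hβ0 : ∀ r ≥ 0, β r 0 = r)
    (hβode : ∀ r ≥ 0, ∀ τ ≥ 0,
      HasDerivWithinAt (β r) (-(ρ₁ (β r τ))) (Set.Ici 0) τ) :
    ClassKL β ∧
    ∀ (t₀ tEnd : ℝ) (w w' : ℝ → ℝ), 0 ≤ t₀ → t₀ < tEnd →
      (∀ t ∈ Set.Ico t₀ tEnd, 0 ≤ w t) →
      (∀ t ∈ Set.Ico t₀ tEnd,
        IntervalIntegrable w' MeasureTheory.volume t₀ t ∧
        w t = w t₀ + ∫ s in t₀..t, w' s) →
      (∀ᵐ t ∂(MeasureTheory.volume.restrict (Set.Ico t₀ tEnd)), w' t ≤ -(α (w t))) →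
      ∀ t ∈ Set.Ico t₀ tEnd, w t ≤ β (w t₀) (ρ₂ (w t₀) * (t - t₀)) := by
  obtain ⟨⟨⟨hρ₁cont, hρ₁0, hρ₁pos⟩, hρ₁sm⟩, hρ₁top⟩ := hρ₁
  have hρ₁nn : ∀ s ≥ (0:ℝ), 0 ≤ ρ₁ s := by
    intro s hs
    rcases eq_or_lt_of_le hs with h | h
    · rw [← h, hρ₁0]
    · exact (hρ₁pos s h).le
  have Bcont : ∀ r ≥ (0:ℝ), ContinuousOn (β r) (Set.Ici 0) :=
    fun r hr τ hτ => (hβode r hr τ hτ).continuousWithinAt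
  have Bder : ∀ r ≥ (0:ℝ), ∀ a ≥ (0:ℝ), ∀ b : ℝ, ∀ t ∈ Set.Ico a b,
      HasDerivWithinAt (β r) (-(ρ₁ (β r t))) (Set.Ici t) t := by
    intro r hr a ha b t ht
    exact (hβode r hr t (ha.trans ht.1)).mono (Set.Ici_subset_Ici.2 (ha.trans ht.1))
  have BderAt : ∀ r ≥ (0:ℝ), ∀ t > (0:ℝ), HasDerivAt (β r) (-(ρ₁ (β r t))) t := by
    intro r hr t ht
    exact (hβode r hr t ht.le).hasDerivAt (Ici_mem_nhds ht)
  have Bzero_fwd : ∀ r ≥ (0:ℝ), ∀ t₁ ≥ (0:ℝ), β r t₁ = 0 → ∀ τ ≥ t₁, β r τ = 0 := by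
    intro r hr t₁ ht₁ hval τ hτ
    have := ode_eq_right hρ₁lip
      ((Bcont r hr).mono (Set.Icc_subset_Ici_self.trans (Set.Ici_subset_Ici.2 ht₁)))
      (Bder r hr t₁ ht₁ τ) (continuousOn_const (c := (0:ℝ)))
      (fun t _ => by
        simpa [hρ₁0] using (hasDerivWithinAt_const t (Set.Ici t) (0:ℝ)))
      (by simp [hval])
    simpa using this ⟨hτ, le_rfl⟩
  have Bzero : ∀ τ ≥ (0:ℝ), β 0 τ = 0 :=
    fun τ hτ => Bzero_fwd 0 le_rfl 0 le_rfl (hβ0 0 le_rfl) τ hτ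
  have Bnonneg : ∀ r ≥ (0:ℝ), ∀ τ ≥ (0:ℝ), 0 ≤ β r τ := by
    intro r hr τ hτ
    by_contra hneg
    push_neg at hneg
    have hcont : ContinuousOn (β r) (Set.Icc 0 τ) :=
      (Bcont r hr).mono (Set.Icc_subset_Ici_self)
    have h0 : (0:ℝ) ∈ Set.Icc (β r τ) (β r 0) := ⟨hneg.le, by rw [hβ0 r hr]; exact hr⟩
    obtain ⟨t₁, ht₁, hval⟩ := intermediate_value_Icc' hτ hcont h0
    have := Bzero_fwd r hr t₁ ht₁.1 hval τ ht₁.2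
    linarith
  have Banti : ∀ r ≥ (0:ℝ), AntitoneOn (β r) (Set.Ici 0) := by
    intro r hr
    apply antitoneOn_of_hasDerivWithinAt_nonpos (convex_Ici 0) (Bcont r hr)
      (f' := fun x => -(ρ₁ (β r x)))
    · intro x hx
      rw [interior_Ici] at hx
      exact ((hβode r hr x hx.le).mono (by rw [interior_Ici]; exact Set.Ioi_subset_Ici_self))
    · intro x hx
      rw [interior_Ici] at hx
      exact neg_nonpos.2 (hρ₁nn _ (Bnonneg r hr x hx.le))
  have Ble : ∀ r ≥ (0:ℝ), ∀ τ ≥ (0:ℝ), β r τ ≤ r := by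
    intro r hr τ hτ
    have := Banti r hr (Set.self_mem_Ici) hτ hτ
    rwa [hβ0 r hr] at this
  have Bstrict : ∀ s ≥ (0:ℝ), ∀ r₁ r₂ : ℝ, 0 ≤ r₁ → r₁ < r₂ → β r₁ s < β r₂ s := by
    intro s hs r₁ r₂ hr₁ hlt
    by_contra hge
    push_neg at hge
    have hr₂ : (0:ℝ) ≤ r₂ := hr₁.trans hlt.le
    set h : ℝ → ℝ := fun u => β r₂ u - β r₁ u with hh
    have hcont : ContinuousOn h (Set.Icc 0 s) :=
      ((Bcont r₂ hr₂).mono Set.Icc_subset_Ici_self).sub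
        ((Bcont r₁ hr₁).mono Set.Icc_subset_Ici_self)
    have h0 : (0:ℝ) ∈ Set.Icc (h s) (h 0) := by
      constructor
      · simp only [hh]; linarith
      · simp only [hh]; rw [hβ0 r₁ hr₁, hβ0 r₂ hr₂]; linarith
    obtain ⟨t₁, ht₁, hval⟩ := intermediate_value_Icc' hs hcont h0
    have ht₁pos : 0 < t₁ := by
      rcases eq_or_lt_of_le ht₁.1 with h' | h'
      · exfalso
        simp only [hh, ← h'] at hval
        rw [hβ0 r₁ hr₁, hβ0 r₂ hr₂] at hval
        linarith
      · exact h'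
    have heq : β r₁ t₁ = β r₂ t₁ := by simp only [hh] at hval; linarith
    have := ode_eq_left hρ₁lip
      ((Bcont r₁ hr₁).mono Set.Icc_subset_Ici_self)
      (fun u hu => (BderAt r₁ hr₁ u hu.1).hasDerivWithinAt)
      ((Bcont r₂ hr₂).mono Set.Icc_subset_Ici_self)
      (fun u hu => (BderAt r₂ hr₂ u hu.1).hasDerivWithinAt)
      heq
    have h00 := this (Set.left_mem_Icc.2 ht₁pos.le)
    rw [hβ0 r₁ hr₁, hβ0 r₂ hr₂] at h00
    exact absurd h00 hlt.ne
  have BcontR : ∀ s ≥ (0:ℝ), ContinuousOn (fun r => β r s) (Set.Ici 0) := by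
    intro s hs
    intro r₀ hr₀
    set R : ℝ := r₀ + 1 with hR
    obtain ⟨K, hK⟩ := locLip_lipschitzOn_Icc hρ₁lip 0 R
    have hv : ∀ t : ℝ, LipschitzOnWith K (fun x => -(ρ₁ x)) (Set.Icc 0 R) := by
      intro t
      rw [show K = 1 * K from (one_mul K).symm]
      exact LipschitzWith.id.neg.comp_lipschitzOnWith hK
    have key : ∀ r ∈ Set.Icc (0:ℝ) R, dist (β r s) (β r₀ s) ≤ dist r r₀ * Real.exp (K * s) := by
      intro r hr
      have hmem : ∀ (q : ℝ), 0 ≤ q → q ≤ R → ∀ u ∈ Set.Ico (0:ℝ) s, β q u ∈ Set.Icc 0 R :=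
        fun q hq hqR u hu => ⟨Bnonneg q hq u hu.1, (Ble q hq u hu.1).trans hqR⟩
      have hr₀R : r₀ ≤ R := by simp [hR]
      have := dist_le_of_trajectories_ODE_of_mem (v := fun _ x => -(ρ₁ x))
        (s := fun _ => Set.Icc 0 R) (fun t _ => hv t)
        ((Bcont r hr.1).mono Set.Icc_subset_Ici_self)
        (Bder r hr.1 0 le_rfl s)
        (hmem r hr.1 hr.2)
        ((Bcont r₀ hr₀).mono Set.Icc_subset_Ici_self)
        (Bder r₀ hr₀ 0 le_rfl s)
        (hmem r₀ hr₀ hr₀R)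
        (le_of_eq (by rw [hβ0 r hr.1, hβ0 r₀ hr₀]))
        s (Set.right_mem_Icc.2 hs)
      simpa using this
    rw [Metric.continuousWithinAt_iff]
    intro ε hε
    have hexp : (0:ℝ) < Real.exp (K * s) := Real.exp_pos _
    refine ⟨min 1 (ε / Real.exp (K * s)), by positivity, ?_⟩
    intro r hr hdist
    have hrR : r ∈ Set.Icc (0:ℝ) R := by
      constructor
      · exact hr
      · have h1 := lt_of_lt_of_le hdist (min_le_left _ _)
        have h2 : |r - r₀| < 1 := by rwa [Real.dist_eq] at h1
        rw [abs_lt] at h2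
        simp only [hR]; linarith
    calc dist (β r s) (β r₀ s) ≤ dist r r₀ * Real.exp (K * s) := key r hrR
      _ < (ε / Real.exp (K * s)) * Real.exp (K * s) :=
          mul_lt_mul_of_pos_right (lt_of_lt_of_le hdist (min_le_right _ _)) hexp
      _ = ε := div_mul_cancel₀ ε hexp.ne'
  have Btend : ∀ r ≥ (0:ℝ), Tendsto (β r) atTop (nhds 0) := by
    intro r hr
    have exists_small : ∀ ε > (0:ℝ), ∃ τ₀ ≥ (0:ℝ), β r τ₀ < ε := by
      intro ε hε
      by_contra hno
      push_neg at hno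
      set c : ℝ := ρ₁ ε with hc
      have hcpos : 0 < c := hρ₁pos ε hε
      have hbound : ∀ τ ≥ (0:ℝ), c ≤ ρ₁ (β r τ) := by
        intro τ hτ
        rcases eq_or_lt_of_le (hno τ hτ) with h | h
        · rw [← h]
        · exact (hρ₁sm.monotoneOn (Set.mem_Ici.2 hε.le)
            (Set.mem_Ici.2 (Bnonneg r hr τ hτ)) (hno τ hτ))
      have hganti : AntitoneOn (fun τ => β r τ + c * τ) (Set.Ici 0) := by
        apply antitoneOn_of_hasDerivWithinAt_nonpos (convex_Ici 0)
          ((Bcont r hr).add (continuous_const.mul continuous_id).continuousOn)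
          (f' := fun x => -(ρ₁ (β r x)) + c)
        · intro x hx
          rw [interior_Ici] at hx
          have hd2 : HasDerivWithinAt (fun x => c * x) c (interior (Set.Ici (0:ℝ))) x := by
            simpa using ((hasDerivAt_id x).const_mul c).hasDerivWithinAt
              (s := interior (Set.Ici (0:ℝ)))
          exact ((hβode r hr x hx.le).mono
            (by rw [interior_Ici]; exact Set.Ioi_subset_Ici_self)).add hd2
        · intro x hx
          rw [interior_Ici] at hx
          have := hbound x hx.le
          linarith
      set T : ℝ := (r + 1) / c with hT
      have hTpos : (0:ℝ) ≤ T := by positivity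
      have hmono := hganti Set.self_mem_Ici hTpos hTpos
      simp only [hβ0 r hr, mul_zero, add_zero] at hmono
      have hcT : c * T = r + 1 := by
        rw [hT, mul_div_cancel₀ _ hcpos.ne']
      have hβT : β r T ≤ -1 := by linarith
      have := hno T hTpos
      linarith
    rw [Metric.tendsto_atTop]
    intro ε hε
    obtain ⟨τ₀, hτ₀, hsmall⟩ := exists_small ε hε
    refine ⟨τ₀, fun τ hτ => ?_⟩
    have h1 : β r τ ≤ β r τ₀ := Banti r hr (Set.mem_Ici.2 hτ₀) (Set.mem_Ici.2 (hτ₀.trans hτ)) hτ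
    have h2 : 0 ≤ β r τ := Bnonneg r hr τ (hτ₀.trans hτ)
    rw [Real.dist_eq, sub_zero, abs_of_nonneg h2]
    linarith
  constructor
  · constructor
    · intro s hs
      refine ⟨⟨BcontR s hs, Bzero s hs, fun r hrpos => ?_⟩, fun r₁ h₁ r₂ _ hlt =>
        Bstrict s hs r₁ r₂ h₁ hlt⟩
      have := Bstrict s hs 0 r le_rfl hrpos
      rwa [Bzero s hs] at this
    · intro r hr
      exact ⟨Bcont r hr, Banti r hr, fun τ hτ => Bnonneg r hr τ hτ, Btend r hr⟩
  -- Part 2: the comparison estimate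
  intro t₀ tEnd w w' ht₀ htE hwnn hint hae t ht
  obtain ⟨htt₀, httE⟩ := ht
  set w₀ := w t₀ with hw₀def
  have hw₀ : (0:ℝ) ≤ w₀ := hwnn t₀ ⟨le_rfl, htE⟩
  set c := ρ₂ w₀ with hcdef
  have hc : (0:ℝ) ≤ c := hρ₂.2.2.1 w₀ hw₀
  have hIccsub : Set.Icc t₀ t ⊆ Set.Ico t₀ tEnd :=
    fun u hu => ⟨hu.1, lt_of_le_of_lt hu.2 httE⟩
  have wcontAll : ∀ tt : ℝ, t₀ ≤ tt → tt < tEnd → ContinuousOn w (Set.Icc t₀ tt) := by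
    intro tt h1 h2
    have hprim : ContinuousOn (fun u => w t₀ + ∫ s in t₀..u, w' s) (Set.Icc t₀ tt) := by
      have h3 := intervalIntegral.continuousOn_primitive_interval'
        (hint tt ⟨h1, h2⟩).1 (Set.left_mem_uIcc)
      rw [Set.uIcc_of_le h1] at h3
      exact continuousOn_const.add h3
    exact hprim.congr (fun u hu => (hint u ⟨hu.1, lt_of_le_of_lt hu.2 h2⟩).2)
  have wcont : ContinuousOn w (Set.Icc t₀ t) := wcontAll t htt₀ httE
  have hsubint : ∀ s₁ s₂ : ℝ, t₀ ≤ s₁ → s₁ ≤ s₂ → s₂ < tEnd →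
      IntervalIntegrable w' MeasureTheory.volume s₁ s₂ := by
    intro s₁ s₂ h1 h2 h3
    exact ((hint s₁ ⟨h1, lt_of_le_of_lt h2 h3⟩).1).symm.trans (hint s₂ ⟨h1.trans h2, h3⟩).1
  have hincr : ∀ s₁ s₂ : ℝ, t₀ ≤ s₁ → s₁ ≤ s₂ → s₂ < tEnd →
      w s₂ - w s₁ = ∫ u in s₁..s₂, w' u := by
    intro s₁ s₂ h1 h2 h3
    have e₁ := (hint s₁ ⟨h1, lt_of_le_of_lt h2 h3⟩).2
    have e₂ := (hint s₂ ⟨h1.trans h2, h3⟩).2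
    have hadd := intervalIntegral.integral_add_adjacent_intervals
      (hint s₁ ⟨h1, lt_of_le_of_lt h2 h3⟩).1 (hsubint s₁ s₂ h1 h2 h3)
    rw [e₁, e₂]
    linarith [hadd]
  have hαnn : ∀ x ≥ (0:ℝ), 0 ≤ α x := by
    intro x hx
    rcases eq_or_lt_of_le hx with h | h
    · rw [← h, hα.2.1]
    · exact (hα.2.2 x h).le
  have hae' : ∀ s₁ s₂ : ℝ, t₀ ≤ s₁ → s₂ < tEnd →
      (∀ᵐ u ∂(MeasureTheory.volume.restrict (Set.Icc s₁ s₂)), w' u ≤ -(α (w u))) := by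
    intro s₁ s₂ h1 h3
    apply MeasureTheory.ae_restrict_of_ae_restrict_of_subset _ hae
    intro u hu
    exact ⟨h1.trans hu.1, lt_of_le_of_lt hu.2 h3⟩
  have wmono : ∀ s₁ s₂ : ℝ, t₀ ≤ s₁ → s₁ ≤ s₂ → s₂ < tEnd → w s₂ ≤ w s₁ := by
    intro s₁ s₂ h1 h2 h3
    have hi := hincr s₁ s₂ h1 h2 h3
    have h4 : (∫ u in s₁..s₂, w' u) ≤ ∫ u in s₁..s₂, (0:ℝ) := by
      apply intervalIntegral.integral_mono_ae_restrict h2 (hsubint s₁ s₂ h1 h2 h3)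
        intervalIntegrable_const
      filter_upwards [hae' s₁ s₂ h1 h3, MeasureTheory.ae_restrict_mem measurableSet_Icc]
        with u hu hmem
      have hwu : 0 ≤ w u := hwnn u ⟨h1.trans hmem.1, lt_of_le_of_lt hmem.2 h3⟩
      have := hαnn _ hwu
      linarith
    simp only [intervalIntegral.integral_zero] at h4
    linarith
  -- the comparison function v
  set v : ℝ → ℝ := fun u => β w₀ (c * (u - t₀)) with hvdef
  have hτnn : ∀ u ≥ t₀, (0:ℝ) ≤ c * (u - t₀) := fun u hu => mul_nonneg hc (by linarith)
  have hvt₀ : v t₀ = w₀ := by simp only [hvdef, sub_self, mul_zero]; exact hβ0 w₀ hw₀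
  have hvnn : ∀ u ≥ t₀, 0 ≤ v u := fun u hu => Bnonneg w₀ hw₀ _ (hτnn u hu)
  have hvcont : ContinuousOn v (Set.Ici t₀) := by
    apply (Bcont w₀ hw₀).comp ((continuous_const.mul (continuous_id.sub continuous_const)).continuousOn)
    intro u hu
    exact hτnn u hu
  have hvder : ∀ u ≥ t₀, HasDerivWithinAt v (-(ρ₁ (v u)) * c) (Set.Ici u) u := by
    intro u hu
    have hg : HasDerivWithinAt (fun x : ℝ => c * (x - t₀)) c (Set.Ici u) u := by
      simpa using (((hasDerivAt_id u).sub_const t₀).const_mul c).hasDerivWithinAt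
        (s := Set.Ici u)
    have hmaps : Set.MapsTo (fun x : ℝ => c * (x - t₀)) (Set.Ici u) (Set.Ici 0) :=
      fun x hx => hτnn x (hu.trans hx)
    exact (hβode w₀ hw₀ (c * (u - t₀)) (hτnn u hu)).comp u hg hmaps
  have hvFTC : ∀ s₁ s₂ : ℝ, t₀ ≤ s₁ → s₁ ≤ s₂ →
      v s₂ - v s₁ = ∫ u in s₁..s₂, -(ρ₁ (v u)) * c := by
    intro s₁ s₂ h1 h2
    have hIci : Set.Icc s₁ s₂ ⊆ Set.Ici t₀ := fun u hu => h1.trans hu.1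
    have hcont' : ContinuousOn v (Set.Icc s₁ s₂) := hvcont.mono hIci
    have hcd : ContinuousOn (fun u => -(ρ₁ (v u)) * c) (Set.Icc s₁ s₂) :=
      ((hρ₁lip.continuous.comp_continuousOn hcont').neg).mul continuousOn_const
    rw [intervalIntegral.integral_eq_sub_of_hasDeriv_right_of_le h2 hcont'
      (fun x hx => (hvder x (h1.trans hx.1.le)).mono Set.Ioi_subset_Ici_self)
      (by rw [intervalIntegrable_iff_integrableOn_Icc_of_le h2]
          exact hcd.integrableOn_compact isCompact_Icc)]
  have hwineq : ∀ s₁ s₂ : ℝ, t₀ ≤ s₁ → s₁ ≤ s₂ → s₂ < tEnd →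
      w s₂ - w s₁ ≤ ∫ u in s₁..s₂, -(ρ₁ (w u)) * c := by
    intro s₁ s₂ h1 h2 h3
    rw [hincr s₁ s₂ h1 h2 h3]
    have hIcc : Set.Icc s₁ s₂ ⊆ Set.Icc t₀ t ∪ Set.Ico t₀ tEnd := by
      intro u hu
      right
      exact ⟨h1.trans hu.1, lt_of_le_of_lt hu.2 h3⟩
    have hwcont' : ContinuousOn w (Set.Icc s₁ s₂) :=
      (wcontAll s₂ (h1.trans h2) h3).mono (fun u hu => ⟨h1.trans hu.1, hu.2⟩)
    apply intervalIntegral.integral_mono_ae_restrict h2 (hsubint s₁ s₂ h1 h2 h3)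
      (by rw [intervalIntegrable_iff_integrableOn_Icc_of_le h2]
          exact (((hρ₁lip.continuous.comp_continuousOn hwcont').neg).mul
            continuousOn_const).integrableOn_compact isCompact_Icc)
    filter_upwards [hae' s₁ s₂ h1 h3, MeasureTheory.ae_restrict_mem measurableSet_Icc]
      with u hu hmem
    have humem : u ∈ Set.Ico t₀ tEnd := ⟨h1.trans hmem.1, lt_of_le_of_lt hmem.2 h3⟩
    have hwu : 0 ≤ w u := hwnn u humem
    have hwle : w u ≤ w₀ := wmono t₀ u le_rfl humem.1 humem.2
    have hρ₂ge : c ≤ ρ₂ (w u) :=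
      hρ₂.2.1 (Set.mem_Ici.2 hwu) (Set.mem_Ici.2 hw₀) hwle
    have hd1 : ρ₁ (w u) * ρ₂ (w u) ≤ α (w u) := hdom (w u) hwu
    have hd2 : ρ₁ (w u) * c ≤ ρ₁ (w u) * ρ₂ (w u) :=
      mul_le_mul_of_nonneg_left hρ₂ge (hρ₁nn _ hwu)
    have : w' u ≤ -(α (w u)) := hu
    nlinarith
  -- crossing argument
  by_contra hcon
  push_neg at hcon
  set g : ℝ → ℝ := fun u => w u - v u with hgdef
  have hgcont : ContinuousOn g (Set.Icc t₀ t) :=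
    wcont.sub (hvcont.mono (fun u hu => hu.1))
  have hgt₀ : g t₀ = 0 := by simp only [hgdef, hvt₀]; simp [hw₀def]
  have hgt : 0 < g t := by
    simp only [hgdef]
    have : v t = β w₀ (c * (t - t₀)) := rfl
    linarith [hcon]
  set S : Set ℝ := Set.Icc t₀ t ∩ g ⁻¹' (Set.Iic 0) with hSdef
  have hSclosed : IsClosed S :=
    hgcont.preimage_isClosed_of_isClosed isClosed_Icc isClosed_Iic
  have hScomp : IsCompact S := isCompact_Icc.of_isClosed_subset hSclosed
    (fun u hu => hu.1)
  have hSne : S.Nonempty := ⟨t₀, ⟨le_rfl, htt₀⟩, by simp [hgt₀]⟩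
  set t₁ := sSup S with ht₁def
  have ht₁S : t₁ ∈ S := hScomp.sSup_mem hSne
  have hg₁ : g t₁ ≤ 0 := ht₁S.2
  have ht₁mem : t₁ ∈ Set.Icc t₀ t := ht₁S.1
  have ht₁t : t₁ < t := lt_of_le_of_ne ht₁mem.2 (fun h => by rw [h] at hg₁; linarith)
  have hpos : ∀ u ∈ Set.Ioc t₁ t, 0 < g u := by
    intro u hu
    by_contra hle
    push_neg at hle
    have huS : u ∈ S := ⟨⟨ht₁mem.1.trans hu.1.le, hu.2⟩, hle⟩
    have := le_csSup hScomp.bddAbove huS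
    linarith [hu.1]
  have hw2 := hwineq t₁ t ht₁mem.1 ht₁t.le httE
  have hv2 := hvFTC t₁ t ht₁mem.1 ht₁t.le
  have hwcont'' : ContinuousOn w (Set.Icc t₁ t) :=
    wcont.mono (fun u hu => ⟨ht₁mem.1.trans hu.1, hu.2⟩)
  have hvcont'' : ContinuousOn v (Set.Icc t₁ t) :=
    hvcont.mono (fun u hu => ht₁mem.1.trans hu.1)
  have hcmp : (∫ u in t₁..t, -(ρ₁ (w u)) * c) ≤ ∫ u in t₁..t, -(ρ₁ (v u)) * c := by
    have hiw : IntervalIntegrable (fun u => -(ρ₁ (w u)) * c) MeasureTheory.volume t₁ t := by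
      rw [intervalIntegrable_iff_integrableOn_Icc_of_le ht₁t.le]
      exact (((hρ₁lip.continuous.comp_continuousOn hwcont'').neg).mul
        continuousOn_const).integrableOn_compact isCompact_Icc
    have hiv : IntervalIntegrable (fun u => -(ρ₁ (v u)) * c) MeasureTheory.volume t₁ t := by
      rw [intervalIntegrable_iff_integrableOn_Icc_of_le ht₁t.le]
      exact (((hρ₁lip.continuous.comp_continuousOn hvcont'').neg).mul
        continuousOn_const).integrableOn_compact isCompact_Icc
    apply intervalIntegral.integral_mono_ae_restrict ht₁t.le hiw hiv
    have hne_ae : ∀ᵐ (u : ℝ) ∂(MeasureTheory.volume.restrict (Set.Icc t₁ t)), u ≠ t₁ := by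
      apply MeasureTheory.ae_restrict_of_ae
      rw [MeasureTheory.ae_iff]
      have : {u : ℝ | ¬u ≠ t₁} = {t₁} := by ext u; simp
      rw [this]
      exact MeasureTheory.measure_singleton t₁
    filter_upwards [MeasureTheory.ae_restrict_mem measurableSet_Icc, hne_ae] with u hmem hne
    have hu : u ∈ Set.Ioc t₁ t := ⟨lt_of_le_of_ne hmem.1 (Ne.symm hne), hmem.2⟩
    have h3 := hpos u hu
    have hvu : 0 ≤ v u := hvnn u (ht₁mem.1.trans hmem.1)
    have hwu : v u ≤ w u := by simp only [hgdef] at h3; linarith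
    have hmono := hρ₁sm.monotoneOn (Set.mem_Ici.2 hvu)
      (Set.mem_Ici.2 (hvu.trans hwu)) hwu
    nlinarith
  have : g t ≤ 0 := by
    simp only [hgdef] at hg₁ ⊢
    linarith [hw2, hv2, hcmp]
  linarith
end

section
/- Let α : ℝ≥0 → ℝ≥0 be positive definite with α(r) < r for all r > 0, and let ρ₁ be a locally Lipschitz class-K∞ function and ρ₂ a class-L function such that α(r) ≥ ρ₁(r)·ρ₂(r) for all r ≥ 0. Let β(r,τ) denote the maximal solution of the scalar ODE dy/dτ = −ρ₁(y) with y(0) = r, so β(r,0) = r. Then for every sequence w : {j₀, j₀+1, …} → ℝ≥0 satisfying w(j+1) − w(j) ≤ −α(w(j)) for all j ≥ j₀ (with j₀ ≥ 0), one has w(j) ≤ β(w(j₀), ρ₂(w(j₀))·(j − j₀)) for all j ≥ j₀. -/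
open Set

/-- Barrier lemma: a continuous function on `[0, c]` that is nonnegative at `0` and has
nonnegative derivative wherever it is negative stays nonnegative. -/
lemma aux_stay_nonneg {ψ : ℝ → ℝ} {c : ℝ}
    (hcont : ContinuousOn ψ (Set.Icc 0 c)) (h0 : 0 ≤ ψ 0)
    (hder : ∀ s ∈ Set.Ioo 0 c, DifferentiableAt ℝ ψ s)
    (hpos : ∀ s ∈ Set.Ioo 0 c, ψ s < 0 → 0 ≤ deriv ψ s) :
    ∀ s ∈ Set.Icc 0 c, 0 ≤ ψ s := by
  by_contra h
  push_neg at h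
  obtain ⟨s₁, hs₁, hneg⟩ := h
  set S := {s | s ∈ Set.Icc (0:ℝ) s₁ ∧ 0 ≤ ψ s} with hSdef
  have hSne : S.Nonempty := ⟨0, ⟨le_refl 0, hs₁.1⟩, h0⟩
  have hSbdd : BddAbove S := ⟨s₁, fun s hs => hs.1.2⟩
  have hScl : IsClosed S := by
    have hEq : S = Set.Icc (0:ℝ) s₁ ∩ ψ ⁻¹' Set.Ici 0 := by
      ext s; simp [hSdef]
    rw [hEq]
    exact (hcont.mono (Set.Icc_subset_Icc_right hs₁.2)).preimage_isClosed_of_isClosed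
      isClosed_Icc isClosed_Ici
  set t₀ := sSup S with ht₀def
  have ht₀S : t₀ ∈ S := hScl.csSup_mem hSne hSbdd
  have hlt : ∀ s, t₀ < s → s ≤ s₁ → ψ s < 0 := by
    intro s hs hs'
    by_contra hcon
    push_neg at hcon
    exact absurd (le_csSup hSbdd ⟨⟨le_trans ht₀S.1.1 hs.le, hs'⟩, hcon⟩) (not_le.mpr hs)
  have ht₀lt : t₀ < s₁ := by
    rcases lt_or_eq_of_le ht₀S.1.2 with h | h
    · exact h
    · exact absurd (h ▸ ht₀S.2) (not_le.mpr hneg)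
  have hmono : MonotoneOn ψ (Set.Icc t₀ s₁) := by
    apply monotoneOn_of_deriv_nonneg (convex_Icc _ _)
      (hcont.mono (Set.Icc_subset_Icc ht₀S.1.1 hs₁.2))
    · intro s hs
      rw [interior_Icc] at hs
      exact (hder s ⟨lt_of_le_of_lt ht₀S.1.1 hs.1, lt_of_lt_of_le hs.2 hs₁.2⟩).differentiableWithinAt
    · intro s hs
      rw [interior_Icc] at hs
      exact hpos s ⟨lt_of_le_of_lt ht₀S.1.1 hs.1, lt_of_lt_of_le hs.2 hs₁.2⟩ (hlt s hs.1 hs.2.le)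
  have := hmono (Set.left_mem_Icc.mpr ht₀lt.le) (Set.right_mem_Icc.mpr ht₀lt.le) ht₀lt.le
  linarith [ht₀S.2]



open Set

lemma aux_beta_nonneg {ρ₁ : ℝ → ℝ} {g : ℝ → ℝ}
    (hρ₁0 : ρ₁ 0 = 0) (hρ₁lip : LocallyLipschitz ρ₁)
    (hgcont : ContinuousOn g (Set.Ici 0))
    (hgode : ∀ τ ≥ 0, HasDerivWithinAt g (-(ρ₁ (g τ))) (Set.Ici 0) τ)
    (hg0 : 0 ≤ g 0) :
    ∀ t ≥ 0, 0 ≤ g t := by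
  by_contra h
  push_neg at h
  obtain ⟨t₁, ht₁, hneg⟩ := h
  set S := {t | t ∈ Set.Icc (0:ℝ) t₁ ∧ 0 ≤ g t} with hSdef
  have hSne : S.Nonempty := ⟨0, ⟨le_refl 0, ht₁⟩, hg0⟩
  have hSbdd : BddAbove S := ⟨t₁, fun s hs => hs.1.2⟩
  have hScl : IsClosed S := by
    have hEq : S = Set.Icc (0:ℝ) t₁ ∩ g ⁻¹' Set.Ici 0 := by ext s; simp [hSdef]
    rw [hEq]
    exact (hgcont.mono (fun x hx => hx.1)).preimage_isClosed_of_isClosed isClosed_Icc isClosed_Ici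
  set t₀ := sSup S with ht₀def
  have ht₀S : t₀ ∈ S := hScl.csSup_mem hSne hSbdd
  have ht₀0 : 0 ≤ t₀ := ht₀S.1.1
  have hlt : ∀ t, t₀ < t → t ≤ t₁ → g t < 0 := by
    intro t ht ht'
    by_contra hcon
    push_neg at hcon
    exact absurd (le_csSup hSbdd ⟨⟨le_trans ht₀0 ht.le, ht'⟩, hcon⟩) (not_le.mpr ht)
  have ht₀lt : t₀ < t₁ := by
    rcases lt_or_eq_of_le ht₀S.1.2 with h | h
    · exact h
    · exact absurd (h ▸ ht₀S.2) (not_le.mpr hneg)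
  -- g t₀ = 0
  have hg0' : g t₀ = 0 := by
    refine le_antisymm ?_ ht₀S.2
    have htend : Filter.Tendsto g (nhdsWithin t₀ (Set.Ioi t₀)) (nhds (g t₀)) :=
      ((hgcont t₀ ht₀0).mono (fun x (hx : x ∈ Set.Ioi t₀) => le_trans ht₀0 (le_of_lt hx)))
    have : ∀ᶠ t in nhdsWithin t₀ (Set.Ioi t₀), g t ≤ 0 := by
      filter_upwards [Ioc_mem_nhdsGT ht₀lt] with t ht
      exact (hlt t ht.1 ht.2).le
    exact le_of_tendsto htend this
  -- local Lipschitz at 0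
  obtain ⟨K, U, hU, hK⟩ := hρ₁lip 0
  obtain ⟨ε, hε, hball⟩ := Metric.mem_nhds_iff.mp hU
  -- find t₂
  have hc : ContinuousWithinAt g (Set.Ici 0) t₀ := hgcont t₀ ht₀0
  have hev : ∀ᶠ t in nhdsWithin t₀ (Set.Ici 0), g t ∈ Metric.ball 0 ε := by
    apply hc
    rw [hg0']
    exact Metric.ball_mem_nhds 0 hε
  obtain ⟨δ, hδ, hδball⟩ := Metric.mem_nhdsWithin_iff.mp hev
  set t₂ := min t₁ (t₀ + δ / 2) with ht₂def
  have ht₀t₂ : t₀ < t₂ := lt_min ht₀lt (by linarith)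
  have hmem : ∀ t ∈ Set.Icc t₀ t₂, g t ∈ Metric.ball 0 ε := by
    intro t ht
    apply hδball
    constructor
    · rw [Metric.mem_ball, Real.dist_eq, abs_of_nonneg (by linarith [ht.1])]
      have := le_trans ht.2 (min_le_right _ _)
      linarith
    · exact le_trans ht₀0 ht.1
  -- uniqueness vs zero function
  have huniq : Set.EqOn g (fun _ => (0:ℝ)) (Set.Icc t₀ t₂) := by
    have hv : ∀ t : ℝ, LipschitzOnWith K ((fun _ (x : ℝ) => -(ρ₁ x)) t) (Metric.ball (0:ℝ) ε) := by
      intro t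
      have : LipschitzOnWith (1 * K) (fun x : ℝ => -(ρ₁ x)) (Metric.ball (0:ℝ) ε) :=
        LipschitzWith.comp_lipschitzOnWith (LipschitzWith.id.neg) (hK.mono hball)
      simpa using this
    apply ODE_solution_unique_of_mem_Icc_right (v := fun _ x => -(ρ₁ x))
      (s := fun _ => Metric.ball (0:ℝ) ε) (fun t _ => hv t)
    · exact hgcont.mono (fun x hx => le_trans ht₀0 hx.1)
    · intro t ht
      exact (hgode t (le_trans ht₀0 ht.1)).mono (Set.Ici_subset_Ici.mpr (le_trans ht₀0 ht.1))
    · intro t ht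
      exact hmem t ⟨ht.1, ht.2.le⟩
    · exact continuousOn_const
    · intro t ht
      simpa [hρ₁0] using (hasDerivWithinAt_const t (Set.Ici t) (0:ℝ))
    · intro t ht
      simpa using hε
    · simpa using hg0'
  have : g t₂ = 0 := huniq (Set.right_mem_Icc.mpr ht₀t₂.le)
  exact absurd this (ne_of_lt (hlt t₂ ht₀t₂ (min_le_left _ _)))

/-- Discrete comparison lemma (Lemma `L:9` of the paper): if `α` is positive definite with
`α r < r` for `r > 0` and `α ≥ ρ₁ · ρ₂` for a locally Lipschitz class-K∞ function `ρ₁` and a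
class-L function `ρ₂`, and `β (r, ·)` is the (maximal) solution of `dy/dτ = -ρ₁ (y)` with
`β r 0 = r`, then any nonnegative sequence `w` with `w (j+1) - w j ≤ -α (w j)` for `j ≥ j₀`
satisfies `w j ≤ β (w j₀) (ρ₂ (w j₀) * (j - j₀))` for all `j ≥ j₀`. -/
theorem comparison_jump (α ρ₁ ρ₂ : ℝ → ℝ) (β : ℝ → ℝ → ℝ)
    (hα : PosDefFun α) (hαlt : ∀ r > 0, α r < r)
    (hρ₁ : ClassKInf ρ₁) (hρ₁lip : LocallyLipschitz ρ₁) (hρ₂ : ClassL ρ₂)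
    (hdom : ∀ r ≥ 0, ρ₁ r * ρ₂ r ≤ α r)
    (hβ0 : ∀ r ≥ 0, β r 0 = r)
    (hβode : ∀ r ≥ 0, ∀ τ ≥ 0,
      HasDerivWithinAt (β r) (-(ρ₁ (β r τ))) (Set.Ici 0) τ)
    (j₀ : ℕ) (w : ℕ → ℝ)
    (hwnn : ∀ j ≥ j₀, 0 ≤ w j)
    (hdec : ∀ j ≥ j₀, w (j + 1) - w j ≤ -(α (w j))) :
    ∀ j ≥ j₀, w j ≤ β (w j₀) (ρ₂ (w j₀) * ((j : ℝ) - (j₀ : ℝ))) := by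
  obtain ⟨⟨⟨hρ₁cont, hρ₁0, hρ₁pos⟩, hρ₁mono⟩, -⟩ := hρ₁
  obtain ⟨hρ₂cont, hρ₂anti, hρ₂nn, -⟩ := hρ₂
  have hρ₁nn : ∀ x, 0 ≤ x → 0 ≤ ρ₁ x := by
    intro x hx
    rcases eq_or_lt_of_le hx with h | h
    · rw [← h, hρ₁0]
    · exact (hρ₁pos x h).le
  set r := w j₀ with hrdef
  have hr : 0 ≤ r := hwnn j₀ le_rfl
  set c := ρ₂ r with hcdef
  have hcnn : 0 ≤ c := hρ₂nn r hr
  have hβcont : ContinuousOn (β r) (Set.Ici 0) := fun τ hτ =>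
    (hβode r hr τ hτ).continuousWithinAt
  -- nonnegativity of β r
  have hβnn : ∀ t ≥ 0, 0 ≤ β r t :=
    aux_beta_nonneg hρ₁0 hρ₁lip hβcont (hβode r hr) (by rw [hβ0 r hr]; exact hr)
  -- β r is antitone on Ici 0
  have hβanti : AntitoneOn (β r) (Set.Ici 0) := by
    apply antitoneOn_of_deriv_nonpos (convex_Ici 0) hβcont
    · intro x hx
      rw [interior_Ici] at hx
      exact (((hβode r hr x hx.le).hasDerivAt (Ici_mem_nhds hx)).differentiableAt).differentiableWithinAt
    · intro x hx
      rw [interior_Ici] at hx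
      rw [((hβode r hr x hx.le).hasDerivAt (Ici_mem_nhds hx)).deriv]
      simp only [neg_nonpos]
      exact hρ₁nn _ (hβnn x hx.le)
  -- key one-step comparison
  have key : ∀ τ ≥ 0, ∀ x, 0 ≤ x → x ≤ β r τ → x - c * ρ₁ x ≤ β r (τ + c) := by
    intro τ hτ x hx hxle
    set ψ : ℝ → ℝ := fun s => β r (τ + s) - (x - s * ρ₁ x) with hψdef
    have hshift : ∀ s : ℝ, 0 ≤ s → 0 ≤ τ + s := fun s hs => by linarith
    have hψcont : ContinuousOn ψ (Set.Icc 0 c) := by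
      apply ContinuousOn.sub
      · exact hβcont.comp (continuous_const.add continuous_id).continuousOn
          (fun s hs => hshift s hs.1)
      · exact (continuous_const.sub (continuous_id.mul continuous_const)).continuousOn
    have hψder : ∀ s ∈ Set.Ioo (0:ℝ) c, HasDerivAt ψ (ρ₁ x - ρ₁ (β r (τ + s))) s := by
      intro s hs
      have hpos : (0:ℝ) < τ + s := by linarith [hs.1]
      have h1 : HasDerivAt (β r) (-(ρ₁ (β r (τ + s)))) (τ + s) :=
        (hβode r hr (τ + s) hpos.le).hasDerivAt (Ici_mem_nhds hpos)
      have h2 : HasDerivAt (fun u : ℝ => β r (τ + u)) (-(ρ₁ (β r (τ + s)))) s := by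
        have := h1.comp s ((hasDerivAt_id s).const_add τ)
        rw [mul_one] at this
        exact this
      have h3 : HasDerivAt (fun u : ℝ => x - u * ρ₁ x) (-(ρ₁ x)) s := by
        have := (hasDerivAt_const s x).sub ((hasDerivAt_id s).mul_const (ρ₁ x))
        rw [zero_sub, one_mul] at this
        exact this
      have := h2.sub h3
      rw [show ρ₁ x - ρ₁ (β r (τ + s)) = -ρ₁ (β r (τ + s)) - -ρ₁ x by ring]
      exact this
    have hψnn : ∀ s ∈ Set.Icc (0:ℝ) c, 0 ≤ ψ s := by
      apply aux_stay_nonneg hψcont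
      · simp only [hψdef, add_zero, zero_mul, sub_zero]
        linarith
      · exact fun s hs => (hψder s hs).differentiableAt
      · intro s hs hneg
        rw [(hψder s hs).deriv]
        have hβs : β r (τ + s) < x := by
          have : β r (τ + s) < x - s * ρ₁ x := by
            simpa [hψdef, sub_neg] using hneg
          nlinarith [hρ₁nn x hx, hs.1.le]
        have : ρ₁ (β r (τ + s)) ≤ ρ₁ x :=
          hρ₁mono.monotoneOn (hβnn _ (hshift s hs.1.le)) hx hβs.le
        linarith
    have := hψnn c (Set.right_mem_Icc.mpr hcnn)
    simpa [hψdef, sub_nonneg] using this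
  -- main induction
  have main : ∀ k : ℕ, w (j₀ + k) ≤ β r (c * k) := by
    intro k
    induction k with
    | zero => simp [hβ0 r hr]; exact le_rfl
    | succ k ih =>
      set x := w (j₀ + k) with hxdef
      have hxnn : 0 ≤ x := hwnn _ (Nat.le_add_right _ _)
      have hτnn : 0 ≤ c * (k : ℝ) := mul_nonneg hcnn (Nat.cast_nonneg k)
      have hxr : x ≤ r := le_trans ih (by
        simpa [hβ0 r hr] using hβanti (le_refl (0:ℝ)) hτnn hτnn)
      have hstep : w (j₀ + (k + 1)) ≤ x - c * ρ₁ x := by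
        have h1 := hdec (j₀ + k) (Nat.le_add_right _ _)
        have h2 := hdom x hxnn
        have h3 : c ≤ ρ₂ x := hρ₂anti hxnn hr hxr
        have h4 : c * ρ₁ x ≤ ρ₁ x * ρ₂ x := by
          rw [mul_comm]
          exact mul_le_mul_of_nonneg_left h3 (hρ₁nn x hxnn)
        have : w (j₀ + k + 1) ≤ x - α x := by linarith
        calc w (j₀ + (k + 1)) = w (j₀ + k + 1) := by ring_nf
          _ ≤ x - α x := this
          _ ≤ x - c * ρ₁ x := by linarith
      calc w (j₀ + (k + 1)) ≤ x - c * ρ₁ x := hstep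
        _ ≤ β r (c * k + c) := key (c * k) hτnn x hxnn ih
        _ = β r (c * (k + 1 : ℕ)) := by push_cast; ring_nf
  intro j hj
  obtain ⟨k, rfl⟩ := Nat.exists_eq_add_of_le hj
  have := main k
  convert this using 2
  push_cast
  ring
end

section
/- Let ρ : ℝ≥0 → ℝ≥0 be positive definite with ρ(r) < r for all r > 0. Let E = ⋃_{k≥0} ([t_k, t_{k+1}] × {k}) be a hybrid time domain determined by a nondecreasing sequence 0 = t₀ ≤ t₁ ≤ t₂ ≤ …, let z : E → ℝ be such that t ↦ z(t,k) is absolutely continuous on each flow interval and z(0,0) ≥ 0, and let v : E → ℝ≥0 be such that t ↦ v(t,k) is continuous on each flow interval. Assume ż(t,k) ≤ −ρ(max{z(t,k) + v(t,k), 0}) for almost every t in each flow interval, and z(t_{k+1}, k+1) − z(t_{k+1}, k) ≤ −ρ(max{z(t_{k+1},k) + v(t_{k+1},k), 0}) at each jump. Then there exists a class-KLL function β such that for all (t,j) ∈ E, z(t,j) ≤ max{ β(z(0,0), t, j), sup{ v(t′,j′) : (t′,j′) ∈ E, t′ + j′ ≤ t + j } }. -/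
def ClassKLL (β : ℝ → ℝ → ℝ → ℝ) : Prop :=
  (∀ s ≥ 0, ClassKL (fun r j => β r s j)) ∧ (∀ s ≥ 0, ClassKL (fun r t => β r t s))

lemma classK_linear (c : ℝ) (hc : 0 < c) : ClassK (fun r => max r 0 * c) := by
  refine ⟨⟨((continuous_id.max continuous_const).mul continuous_const).continuousOn,
    by simp, fun s hs => by
      show 0 < max s 0 * c
      rw [max_eq_left hs.le]; exact mul_pos hs hc⟩, ?_⟩
  intro a ha b hb hab
  show max a 0 * c < max b 0 * c
  rw [max_eq_left ha, max_eq_left hb]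
  exact mul_lt_mul_of_pos_right hab hc

lemma classL_aux (ψ : ℝ → ℝ) (hcψ : Continuous ψ) (haψ : Antitone ψ)
    (hpos : ∀ x, 0 < ψ x) (h0 : Filter.Tendsto ψ Filter.atTop (nhds 0))
    (C A : ℝ) (hC : 0 ≤ C) : ClassL (fun x => C * ψ (A + max x 0)) := by
  refine ⟨(continuous_const.mul
      (hcψ.comp (continuous_const.add (continuous_id.max continuous_const)))).continuousOn,
    ?_, fun s _ => mul_nonneg hC (hpos _).le, ?_⟩
  · intro a _ b _ hab
    exact mul_le_mul_of_nonneg_left (haψ (by gcongr)) hC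
  · have h1 : Filter.Tendsto (fun x : ℝ => A + max x 0) Filter.atTop Filter.atTop :=
      Filter.tendsto_atTop_add_const_left _ A
        (Filter.tendsto_atTop_mono (fun x => le_max_left x 0) Filter.tendsto_id)
    simpa using (h0.comp h1).const_mul C

lemma classKLL_mul_aux (ψ : ℝ → ℝ) (hcψ : Continuous ψ) (haψ : Antitone ψ)
    (hpos : ∀ x, 0 < ψ x) (h0 : Filter.Tendsto ψ Filter.atTop (nhds 0)) :
    ClassKLL (fun r s j => max r 0 * ψ (max s 0 + max j 0)) := by
  constructor
  · intro s _
    exact ⟨fun j _ => classK_linear _ (hpos _),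
      fun r hr => classL_aux ψ hcψ haψ hpos h0 (max r 0) (max s 0) (le_max_right r 0)⟩
  · intro s _
    refine ⟨fun j _ => classK_linear _ (hpos _), fun r hr => ?_⟩
    show ClassL fun x : ℝ => max r 0 * ψ (max x 0 + max s 0)
    have h := classL_aux ψ hcψ haψ hpos h0 (max r 0) (max s 0) (le_max_right r 0)
    have heq : (fun x : ℝ => max r 0 * ψ (max s 0 + max x 0))
        = (fun x : ℝ => max r 0 * ψ (max x 0 + max s 0)) := by
      funext x; rw [add_comm]
    rwa [heq] at h

def hcSet (t : ℕ → ℝ) (v : ℝ → ℕ → ℝ) (a : ℝ) : Set ℝ :=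
  {x | ∃ (k' : ℕ) (τ' : ℝ),
    τ' ∈ Set.Icc (t k') (t (k' + 1)) ∧ τ' + (k' : ℝ) ≤ a ∧ x = v τ' k'}

lemma hcSet_bdd (t : ℕ → ℝ) (v : ℝ → ℕ → ℝ) (ht : ∀ k, 0 ≤ t k)
    (hvcont : ∀ k : ℕ, ContinuousOn (fun τ => v τ k) (Set.Icc (t k) (t (k + 1))))
    (a : ℝ) : BddAbove (hcSet t v a) := by
  by_cases ha : 0 ≤ a
  · have hsub : hcSet t v a ⊆
        ⋃ k' ∈ Set.Iio (Nat.floor a + 1), (fun τ' => v τ' k') '' Set.Icc (t k') (t (k' + 1)) := by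
      rintro x ⟨k', τ', hmem, hle, rfl⟩
      have hk' : (k' : ℝ) ≤ a := le_trans (by linarith [ht k', hmem.1]) hle
      have hk2 : k' < Nat.floor a + 1 := Nat.lt_succ_of_le (Nat.le_floor hk')
      exact Set.mem_biUnion hk2 ⟨τ', hmem, rfl⟩
    refine BddAbove.mono hsub ?_
    rw [Set.Finite.bddAbove_biUnion (Set.finite_Iio _)]
    intro i _
    exact (isCompact_Icc.image_of_continuousOn (hvcont i)).bddAbove
  · refine ⟨0, ?_⟩
    rintro x ⟨k', τ', hmem, hle, rfl⟩
    exfalso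
    have h1 : (0:ℝ) ≤ τ' := le_trans (ht k') hmem.1
    have h2 : (0:ℝ) ≤ (k' : ℝ) := Nat.cast_nonneg k'
    linarith

lemma hcSet_nonempty (t : ℕ → ℝ) (v : ℝ → ℕ → ℝ) (ht0 : t 0 = 0) (hmono : Monotone t)
    (a : ℝ) (ha : 0 ≤ a) : (hcSet t v a).Nonempty := by
  refine ⟨v 0 0, 0, 0, ⟨by rw [ht0], ?_⟩, by simpa, rfl⟩
  rw [← ht0]; exact hmono (Nat.zero_le 1)

lemma hcSet_mono (t : ℕ → ℝ) (v : ℝ → ℕ → ℝ) {a b : ℝ} (hab : a ≤ b) :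
    hcSet t v a ⊆ hcSet t v b := by
  rintro x ⟨k', τ', hmem, hle, rfl⟩
  exact ⟨k', τ', hmem, hle.trans hab, rfl⟩

/-- Lemma `L:2` of the paper: for a positive definite `ρ` with `ρ r < r` for `r > 0`,
a hybrid arc `z` on the hybrid time domain `E = ⋃ₖ [t k, t (k+1)] × {k}` (with `t`
nondecreasing and `t 0 = 0`, `z` absolutely continuous along flows, encoded via the a.e.
derivative `z'` and the integral identity, and `z (0,0) ≥ 0`) and a nonnegative hybrid
signal `v` continuous along flows, satisfying
`ż ≤ -ρ (max (z + v) 0)` a.e. along flows and the corresponding decrease at jumps,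
obey `z (τ,k) ≤ max (β (z (0,0)) τ k) (sup of v over earlier hybrid times)`
for some class-KLL function `β`. -/
theorem hybrid_comparison_with_input (ρ : ℝ → ℝ)
    (hρ : PosDefFun ρ) (hρlt : ∀ r > 0, ρ r < r)
    (t : ℕ → ℝ) (ht0 : t 0 = 0) (htmono : Monotone t)
    (z z' v : ℝ → ℕ → ℝ)
    (hz00 : 0 ≤ z 0 0)
    (hvnn : ∀ k : ℕ, ∀ τ ∈ Set.Icc (t k) (t (k + 1)), 0 ≤ v τ k)
    (hvcont : ∀ k : ℕ, ContinuousOn (fun τ => v τ k) (Set.Icc (t k) (t (k + 1))))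
    (hAC : ∀ k : ℕ, ∀ τ ∈ Set.Icc (t k) (t (k + 1)),
      IntervalIntegrable (fun s => z' s k) MeasureTheory.volume (t k) τ ∧
      z τ k = z (t k) k + ∫ s in (t k)..τ, z' s k)
    (hflow : ∀ k : ℕ,
      ∀ᵐ τ ∂(MeasureTheory.volume.restrict (Set.Icc (t k) (t (k + 1)))),
        z' τ k ≤ -(ρ (max (z τ k + v τ k) 0)))
    (hjump : ∀ k : ℕ,
      z (t (k + 1)) (k + 1) - z (t (k + 1)) k
        ≤ -(ρ (max (z (t (k + 1)) k + v (t (k + 1)) k) 0))) :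
    ∃ β : ℝ → ℝ → ℝ → ℝ, ClassKLL β ∧
      ∀ k : ℕ, ∀ τ ∈ Set.Icc (t k) (t (k + 1)),
        z τ k ≤ max (β (z 0 0) τ (k : ℝ))
          (sSup {x : ℝ | ∃ (k' : ℕ) (τ' : ℝ),
            τ' ∈ Set.Icc (t k') (t (k' + 1)) ∧ τ' + (k' : ℝ) ≤ τ + (k : ℝ) ∧
            x = v τ' k'}) := by
  classical
  have htk0 : ∀ k, 0 ≤ t k := fun k => ht0 ▸ htmono (Nat.zero_le k)
  have hρmax : ∀ x : ℝ, 0 ≤ ρ (max x 0) := by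
    intro x
    rcases lt_or_eq_of_le (le_max_right x 0) with h | h
    · exact (hρ.2.2 _ h).le
    · rw [← h, hρ.2.1]
  -- basic flow identity
  have hzflow : ∀ k σ τ, t k ≤ σ → σ ≤ τ → τ ≤ t (k + 1) →
      z τ k - z σ k = ∫ s in σ..τ, z' s k := by
    intro k σ τ h1 h2 h3
    have hσ : σ ∈ Set.Icc (t k) (t (k + 1)) := ⟨h1, h2.trans h3⟩
    have hτ : τ ∈ Set.Icc (t k) (t (k + 1)) := ⟨h1.trans h2, h3⟩
    obtain ⟨iτ, eτ⟩ := hAC k τ hτ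
    obtain ⟨iσ, eσ⟩ := hAC k σ hσ
    rw [eτ, eσ, add_sub_add_left_eq_sub]
    exact intervalIntegral.integral_interval_sub_left iτ iσ
  -- quantitative decrease along a flow
  have hzde : ∀ k σ τ (δ : ℝ), t k ≤ σ → σ ≤ τ → τ ≤ t (k + 1) →
      (∀ᵐ s ∂(MeasureTheory.volume.restrict (Set.Icc σ τ)), z' s k ≤ -δ) →
      z τ k ≤ z σ k - δ * (τ - σ) := by
    intro k σ τ δ h1 h2 h3 hae
    have hτ : τ ∈ Set.Icc (t k) (t (k + 1)) := ⟨h1.trans h2, h3⟩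
    have hint : IntervalIntegrable (fun s => z' s k) MeasureTheory.volume σ τ := by
      refine (hAC k τ hτ).1.mono_set ?_
      rw [Set.uIcc_of_le h2, Set.uIcc_of_le (h1.trans h2)]
      exact Set.Icc_subset_Icc_left h1
    have hle : ∫ s in σ..τ, z' s k ≤ ∫ _s in σ..τ, (-δ : ℝ) :=
      intervalIntegral.integral_mono_ae_restrict h2 hint intervalIntegrable_const hae
    rw [intervalIntegral.integral_const, smul_eq_mul] at hle
    have hkey := hzflow k σ τ h1 h2 h3
    nlinarith [hle, hkey]
  -- z nonincreasing along flows
  have hzmono : ∀ k σ τ, t k ≤ σ → σ ≤ τ → τ ≤ t (k + 1) → z τ k ≤ z σ k := by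
    intro k σ τ h1 h2 h3
    have hae : ∀ᵐ s ∂(MeasureTheory.volume.restrict (Set.Icc σ τ)), z' s k ≤ -(0 : ℝ) := by
      have hsub : Set.Icc σ τ ⊆ Set.Icc (t k) (t (k + 1)) := Set.Icc_subset_Icc h1 h3
      have h := MeasureTheory.ae_restrict_of_ae_restrict_of_subset hsub (hflow k)
      filter_upwards [h] with s hs
      have := hρmax (z s k + v s k)
      linarith
    have := hzde k σ τ 0 h1 h2 h3 hae
    linarith
  have hjump' : ∀ k, z (t (k + 1)) (k + 1) ≤ z (t (k + 1)) k := by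
    intro k
    have h1 := hjump k
    have h2 := hρmax (z (t (k + 1)) k + v (t (k + 1)) k)
    linarith
  have hz0k : ∀ k, z (t k) k ≤ z 0 0 := by
    intro k
    induction k with
    | zero => rw [ht0]
    | succ n ih =>
      have h1 : z (t (n + 1)) n ≤ z (t n) n :=
        hzmono n (t n) (t (n + 1)) le_rfl (htmono (Nat.le_succ n)) le_rfl
      exact ((hjump' n).trans h1).trans ih
  have hzle : ∀ k, ∀ τ ∈ Set.Icc (t k) (t (k + 1)), z τ k ≤ z 0 0 := by
    intro k τ hτ
    exact (hzmono k (t k) τ le_rfl hτ.1 hτ.2).trans (hz0k k)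
  -- sup of v lemmas
  have hVbdd : ∀ a : ℝ, BddAbove (hcSet t v a) := hcSet_bdd t v htk0 hvcont
  have hVne : ∀ a : ℝ, 0 ≤ a → (hcSet t v a).Nonempty := hcSet_nonempty t v ht0 htmono
  have hVmono : ∀ a b : ℝ, 0 ≤ a → a ≤ b → sSup (hcSet t v a) ≤ sSup (hcSet t v b) :=
    fun a b ha hab => csSup_le_csSup (hVbdd b) (hVne a ha) (hcSet_mono t v hab)
  have hVmem : ∀ k, ∀ τ ∈ Set.Icc (t k) (t (k + 1)), v τ k ≤ sSup (hcSet t v (τ + k)) :=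
    fun k τ hτ => le_csSup (hVbdd _) ⟨k, τ, hτ, le_rfl, rfl⟩
  have hτk0 : ∀ (k : ℕ) (τ : ℝ), t k ≤ τ → 0 ≤ τ + (k : ℝ) := by
    intro k τ h
    have := htk0 k
    have := Nat.cast_nonneg (α := ℝ) k
    linarith
  -- main per-ε decrease estimate
  have main : ∀ ε > 0, ∃ δ > 0, ∀ k, ∀ τ ∈ Set.Icc (t k) (t (k + 1)),
      z τ k ≤ max (sSup (hcSet t v (τ + k))) (max ε (z 0 0 - δ * (τ + k))) := by
    intro ε hε
    set b := max ε (2 * z 0 0) with hbdef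
    have hεb : ε ≤ b := le_max_left _ _
    have hcont : ContinuousOn ρ (Set.Icc ε b) :=
      hρ.1.mono (fun x hx => le_trans hε.le hx.1)
    obtain ⟨c, hc, hmin⟩ := isCompact_Icc.exists_isMinOn (Set.nonempty_Icc.2 hεb) hcont
    set δ := ρ c with hδdef
    have hδpos : 0 < δ := hρ.2.2 c (lt_of_lt_of_le hε hc.1)
    have hδle : ∀ x ∈ Set.Icc ε b, δ ≤ ρ x := fun x hx => hmin hx
    refine ⟨δ, hδpos, ?_⟩
    -- pointwise: above the sup level, the decrease rate is at least δ
    have hptw : ∀ k, ∀ σ ∈ Set.Icc (t k) (t (k + 1)),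
        max (sSup (hcSet t v (σ + k))) ε < z σ k →
        δ ≤ ρ (max (z σ k + v σ k) 0) := by
      intro k σ hσ hlt
      obtain ⟨hlt1, hlt2⟩ := max_lt_iff.1 hlt
      have hv0 : 0 ≤ v σ k := hvnn k σ hσ
      have hvV : v σ k ≤ sSup (hcSet t v (σ + k)) := hVmem k σ hσ
      have hzub : z σ k ≤ z 0 0 := hzle k σ hσ
      have hx1 : ε ≤ z σ k + v σ k := by linarith
      have hx2 : z σ k + v σ k ≤ b := by
        have : z σ k + v σ k ≤ 2 * z 0 0 := by linarith
        exact this.trans (le_max_right _ _)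
      have hmax : max (z σ k + v σ k) 0 = z σ k + v σ k :=
        max_eq_left (by linarith)
      rw [hmax]
      exact hδle _ ⟨hx1, hx2⟩
    -- flow propagation
    have hflowstep : ∀ k,
        z (t k) k ≤ max (sSup (hcSet t v (t k + k))) (max ε (z 0 0 - δ * (t k + k))) →
        ∀ τ ∈ Set.Icc (t k) (t (k + 1)),
          z τ k ≤ max (sSup (hcSet t v (τ + k))) (max ε (z 0 0 - δ * (τ + k))) := by
      intro k hbase τ hτ
      by_cases hdrop : ∃ σ, σ ∈ Set.Icc (t k) τ ∧ z σ k ≤ max (sSup (hcSet t v (σ + k))) ε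
      · obtain ⟨σ, hσ, hσle⟩ := hdrop
        have h1 : z τ k ≤ z σ k := hzmono k σ τ hσ.1 hσ.2 hτ.2
        have h2 : sSup (hcSet t v (σ + k)) ≤ sSup (hcSet t v (τ + k)) :=
          hVmono _ _ (hτk0 k σ hσ.1) (by linarith [hσ.2])
        refine h1.trans (hσle.trans ?_)
        exact max_le_max h2 (le_max_left ε _)
      · push_neg at hdrop
        have hae : ∀ᵐ s ∂(MeasureTheory.volume.restrict (Set.Icc (t k) τ)), z' s k ≤ -δ := by
          have h1 := MeasureTheory.ae_restrict_of_ae_restrict_of_subset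
            (Set.Icc_subset_Icc_right hτ.2) (hflow k)
          have h2 := MeasureTheory.ae_restrict_mem (μ := MeasureTheory.volume)
            (measurableSet_Icc (a := t k) (b := τ))
          filter_upwards [h1, h2] with s hs1 hs2
          have hσI : s ∈ Set.Icc (t k) (t (k + 1)) := ⟨hs2.1, hs2.2.trans hτ.2⟩
          have := hptw k s hσI (hdrop s hs2)
          linarith
        have hτz := hzde k (t k) τ δ le_rfl hτ.1 hτ.2 hae
        have hbase' : z (t k) k ≤ z 0 0 - δ * (t k + k) := by
          have h0 := hdrop (t k) ⟨le_rfl, hτ.1⟩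
          obtain ⟨hA, hB⟩ := max_lt_iff.1 h0
          rcases le_max_iff.1 hbase with h | h
          · exact absurd h (not_le.2 hA)
          · rcases le_max_iff.1 h with h' | h'
            · exact absurd h' (not_le.2 hB)
            · exact h'
        have hring : δ * (τ + (k : ℝ)) = δ * (t k + k) + δ * (τ - t k) := by ring
        have : z τ k ≤ z 0 0 - δ * (τ + k) := by linarith
        exact this.trans ((le_max_right ε _).trans (le_max_right _ _))
    -- base points by induction
    have hbase : ∀ k,
        z (t k) k ≤ max (sSup (hcSet t v (t k + k))) (max ε (z 0 0 - δ * (t k + k))) := by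
      intro k
      induction k with
      | zero =>
        rw [ht0]
        simp only [Nat.cast_zero, add_zero, mul_zero, sub_zero]
        exact le_max_of_le_right (le_max_right _ _)
      | succ n ih =>
        have hmem : t (n + 1) ∈ Set.Icc (t n) (t (n + 1)) := ⟨htmono (Nat.le_succ n), le_rfl⟩
        have hend := hflowstep n ih (t (n + 1)) hmem
        have hcast : (((n : ℕ) + 1 : ℕ) : ℝ) = (n : ℝ) + 1 := by push_cast; ring
        have hmono1 : sSup (hcSet t v (t (n + 1) + n)) ≤
            sSup (hcSet t v (t (n + 1) + ((n : ℕ) + 1 : ℕ))) := by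
          refine hVmono _ _ (hτk0 n (t (n + 1)) (htmono (Nat.le_succ n))) ?_
          rw [hcast]; linarith
        by_cases hcase : z (t (n + 1)) n ≤ max (sSup (hcSet t v (t (n + 1) + n))) ε
        · refine (hjump' n).trans (hcase.trans ?_)
          exact max_le_max hmono1 (le_max_left ε _)
        · push_neg at hcase
          have hδjump := hptw n (t (n + 1)) hmem hcase
          have hj := hjump n
          have hprev : z (t (n + 1)) n ≤ z 0 0 - δ * (t (n + 1) + n) := by
            obtain ⟨hA, hB⟩ := max_lt_iff.1 hcase
            rcases le_max_iff.1 hend with h | h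
            · exact absurd h (not_le.2 hA)
            · rcases le_max_iff.1 h with h' | h'
              · exact absurd h' (not_le.2 hB)
              · exact h'
          have hfin : z (t (n + 1)) (n + 1) ≤
              z 0 0 - δ * (t (n + 1) + ((n : ℕ) + 1 : ℕ)) := by
            rw [hcast]
            nlinarith
          exact hfin.trans ((le_max_right ε _).trans (le_max_right _ _))
    intro k τ hτ
    exact hflowstep k (hbase k) τ hτ
  -- the tail-envelope function G
  set G : ℝ → ℝ := fun a => sSup ({(0 : ℝ)} ∪
    {x | ∃ (k : ℕ) (τ : ℝ), τ ∈ Set.Icc (t k) (t (k + 1)) ∧ a ≤ τ + (k : ℝ) ∧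
      sSup (hcSet t v (τ + (k : ℝ))) < z τ k ∧ x = z τ k}) with hGdef
  have hGbdd : ∀ a : ℝ, BddAbove ({(0 : ℝ)} ∪
      {x | ∃ (k : ℕ) (τ : ℝ), τ ∈ Set.Icc (t k) (t (k + 1)) ∧ a ≤ τ + (k : ℝ) ∧
        sSup (hcSet t v (τ + (k : ℝ))) < z τ k ∧ x = z τ k}) := by
    intro a
    refine ⟨max (z 0 0) 0, ?_⟩
    rintro x (rfl | ⟨k, τ, hτ, _, _, rfl⟩)
    · exact le_max_right _ _
    · exact le_max_of_le_left (hzle k τ hτ)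
  have hGne : ∀ a : ℝ, ({(0 : ℝ)} ∪
      {x | ∃ (k : ℕ) (τ : ℝ), τ ∈ Set.Icc (t k) (t (k + 1)) ∧ a ≤ τ + (k : ℝ) ∧
        sSup (hcSet t v (τ + (k : ℝ))) < z τ k ∧ x = z τ k}).Nonempty :=
    fun a => ⟨0, Or.inl rfl⟩
  have hG0 : ∀ a, 0 ≤ G a := fun a => le_csSup (hGbdd a) (Or.inl rfl)
  have hGanti : Antitone G := by
    intro a b hab
    refine csSup_le_csSup (hGbdd a) (hGne b) ?_
    rintro x (rfl | ⟨k, τ, hτ, hge, hlt, rfl⟩)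
    · exact Or.inl rfl
    · exact Or.inr ⟨k, τ, hτ, hab.trans hge, hlt, rfl⟩
  have hGbound : ∀ k, ∀ τ ∈ Set.Icc (t k) (t (k + 1)),
      z τ k ≤ max (G (τ + k)) (sSup (hcSet t v (τ + k))) := by
    intro k τ hτ
    by_cases h : sSup (hcSet t v (τ + k)) < z τ k
    · exact le_max_of_le_left (le_csSup (hGbdd _) (Or.inr ⟨k, τ, hτ, le_rfl, h, rfl⟩))
    · exact le_max_of_le_right (not_lt.1 h)
  have hGtend : Filter.Tendsto G Filter.atTop (nhds 0) := by
    rw [Metric.tendsto_atTop]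
    intro ε hε
    obtain ⟨δ, hδ, hb⟩ := main (ε / 2) (half_pos hε)
    refine ⟨z 0 0 / δ + 1, fun a ha => ?_⟩
    have hGa : G a ≤ ε / 2 := by
      refine csSup_le (hGne a) ?_
      rintro x (rfl | ⟨k, τ, hτ, hge, hlt, rfl⟩)
      · linarith
      · have hzb := hb k τ hτ
        have hτa : a ≤ τ + (k : ℝ) := hge
        have hda : δ * a ≤ δ * (τ + (k : ℝ)) := mul_le_mul_of_nonneg_left hτa hδ.le
        have hcancel : δ * (z 0 0 / δ + 1) = z 0 0 + δ := by
          field_simp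
        have h1 : z 0 0 - δ * (τ + (k : ℝ)) ≤ -δ := by
          have : δ * (z 0 0 / δ + 1) ≤ δ * a := mul_le_mul_of_nonneg_left ha hδ.le
          linarith
        rcases le_max_iff.1 hzb with h | h
        · exact absurd h (not_le.2 hlt)
        · rcases le_max_iff.1 h with h' | h'
          · exact h'
          · linarith
    rw [Real.dist_eq, abs_of_nonneg (by linarith [hG0 a])]
    linarith
  -- integrability of G
  have hGint : ∀ a b : ℝ, IntervalIntegrable G MeasureTheory.volume a b :=
    fun a b => hGanti.intervalIntegrable
  -- smoothed envelope Φ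
  set Φ : ℝ → ℝ := fun a => (∫ s in (a - 1)..a, G s) + (max (z 0 0) 0 + 1) * Real.exp (-a)
    with hΦdef
  have hΦcont : Continuous Φ := by
    have h1 : Continuous fun a : ℝ => ∫ s in (0 : ℝ)..a, G s :=
      intervalIntegral.continuous_primitive hGint 0
    have heq : Φ = fun a => ((∫ s in (0 : ℝ)..a, G s) - ∫ s in (0 : ℝ)..(a - 1), G s)
        + (max (z 0 0) 0 + 1) * Real.exp (-a) := by
      funext a
      rw [intervalIntegral.integral_interval_sub_left (hGint 0 a) (hGint 0 (a - 1))]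
    rw [heq]
    exact ((h1.sub (h1.comp (continuous_id.sub continuous_const))).add
      (continuous_const.mul (Real.continuous_exp.comp continuous_neg)))
  have hexp_nonneg : ∀ a : ℝ, 0 ≤ (max (z 0 0) 0 + 1) * Real.exp (-a) := by
    intro a
    have : (0:ℝ) ≤ max (z 0 0) 0 + 1 := by positivity
    exact mul_nonneg this (Real.exp_pos _).le
  have hΦge : ∀ a, G a ≤ Φ a := by
    intro a
    have h1 : ∫ _s in (a - 1)..a, G a ≤ ∫ s in (a - 1)..a, G s := by
      refine intervalIntegral.integral_mono_on (by linarith) intervalIntegrable_const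
        (hGint _ _) ?_
      intro x hx
      exact hGanti hx.2
    rw [intervalIntegral.integral_const, smul_eq_mul] at h1
    have := hexp_nonneg a
    simp only [hΦdef]
    nlinarith
  have hΦpos : ∀ a, 0 < Φ a := by
    intro a
    have h1 : (0:ℝ) ≤ ∫ s in (a - 1)..a, G s := by
      refine intervalIntegral.integral_nonneg (by linarith) ?_
      intro u _
      exact hG0 u
    have h2 : 0 < (max (z 0 0) 0 + 1) * Real.exp (-a) := by positivity
    simp only [hΦdef]
    linarith
  have hΦanti : Antitone Φ := by
    intro a b hab
    have hd : 0 ≤ b - a := by linarith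
    have hint1 : ∫ s in (b - 1)..b, G s = ∫ s in (a - 1)..a, G (s + (b - a)) := by
      rw [intervalIntegral.integral_comp_add_right (fun x => G x) (b - a)]
      congr 1 <;> ring
    have hint2 : ∫ s in (a - 1)..a, G (s + (b - a)) ≤ ∫ s in (a - 1)..a, G s := by
      refine intervalIntegral.integral_mono_on (by linarith) ?_ (hGint _ _) ?_
      · exact (hGanti.comp_monotone (monotone_id.add_const (b - a))).intervalIntegrable
      · intro x _
        exact hGanti (by linarith)
    have hexp : (max (z 0 0) 0 + 1) * Real.exp (-b) ≤ (max (z 0 0) 0 + 1) * Real.exp (-a) := by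
      have : Real.exp (-b) ≤ Real.exp (-a) := Real.exp_le_exp.2 (by linarith)
      have h0 : (0:ℝ) ≤ max (z 0 0) 0 + 1 := by positivity
      exact mul_le_mul_of_nonneg_left this h0
    show (∫ s in (b - 1)..b, G s) + (max (z 0 0) 0 + 1) * Real.exp (-b)
        ≤ (∫ s in (a - 1)..a, G s) + (max (z 0 0) 0 + 1) * Real.exp (-a)
    rw [hint1]; exact add_le_add hint2 hexp
  have hΦtend : Filter.Tendsto Φ Filter.atTop (nhds 0) := by
    have hub : ∀ a, Φ a ≤ G (a - 1) + (max (z 0 0) 0 + 1) * Real.exp (-a) := by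
      intro a
      have h1 : ∫ s in (a - 1)..a, G s ≤ ∫ _s in (a - 1)..a, G (a - 1) := by
        refine intervalIntegral.integral_mono_on (by linarith) (hGint _ _)
          intervalIntegrable_const ?_
        intro x hx
        exact hGanti hx.1
      rw [intervalIntegral.integral_const, smul_eq_mul] at h1
      simp only [hΦdef]
      nlinarith
    have htail : Filter.Tendsto (fun a => G (a - 1) + (max (z 0 0) 0 + 1) * Real.exp (-a))
        Filter.atTop (nhds 0) := by
      have h1 : Filter.Tendsto (fun a : ℝ => G (a - 1)) Filter.atTop (nhds 0) :=
        hGtend.comp (Filter.tendsto_atTop_add_const_right _ (-1)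
          (by simpa using (show Filter.Tendsto (fun a : ℝ => a) Filter.atTop Filter.atTop from Filter.tendsto_id)))
      have h2 : Filter.Tendsto (fun a : ℝ => (max (z 0 0) 0 + 1) * Real.exp (-a))
          Filter.atTop (nhds 0) := by
        have := (Real.tendsto_exp_neg_atTop_nhds_zero).const_mul (max (z 0 0) 0 + 1)
        simpa using this
      simpa using h1.add h2
    exact squeeze_zero (fun a => (hΦpos a).le) hub htail
  -- assemble β
  by_cases hz0 : 0 < z 0 0
  · refine ⟨fun r s j => max r 0 * ((fun x => Φ x / z 0 0) (max s 0 + max j 0)), ?_, ?_⟩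
    · refine classKLL_mul_aux _ (hΦcont.div_const _) ?_ ?_ ?_
      · intro a b hab
        exact (div_le_div_iff_of_pos_right hz0).2 (hΦanti hab)
      · intro x
        exact div_pos (hΦpos x) hz0
      · simpa using hΦtend.div_const (z 0 0)
    · intro k τ hτ
      have hτ0 : (0:ℝ) ≤ τ := (htk0 k).trans hτ.1
      have hβ : max (z 0 0) 0 * (Φ (max τ 0 + max (k : ℝ) 0) / z 0 0) = Φ (τ + (k : ℝ)) := by
        rw [max_eq_left hz00, max_eq_left hτ0, max_eq_left (Nat.cast_nonneg k)]
        field_simp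
      have hset : {x : ℝ | ∃ (k' : ℕ) (τ' : ℝ),
          τ' ∈ Set.Icc (t k') (t (k' + 1)) ∧ τ' + (k' : ℝ) ≤ τ + (k : ℝ) ∧
          x = v τ' k'} = hcSet t v (τ + (k : ℝ)) := rfl
      rw [hset]
      have h1 := hGbound k τ hτ
      have h2 : G (τ + (k:ℝ)) ≤ Φ (τ + (k:ℝ)) := hΦge _
      calc z τ k ≤ max (G (τ + k)) (sSup (hcSet t v (τ + k))) := h1
        _ ≤ max (max (z 0 0) 0 * (Φ (max τ 0 + max (k : ℝ) 0) / z 0 0))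
            (sSup (hcSet t v (τ + k))) := by
              rw [hβ]; exact max_le_max h2 le_rfl
  · have hz0eq : z 0 0 = 0 := le_antisymm (not_lt.1 hz0) hz00
    refine ⟨fun r s j => max r 0 * (fun x => Real.exp (-x)) (max s 0 + max j 0), ?_, ?_⟩
    · refine classKLL_mul_aux _ (Real.continuous_exp.comp continuous_neg) ?_
        (fun x => Real.exp_pos _) Real.tendsto_exp_neg_atTop_nhds_zero
      intro a b hab
      show Real.exp (-b) ≤ Real.exp (-a)
      exact Real.exp_le_exp.2 (by linarith)
    · intro k τ hτ
      have h1 : z τ k ≤ 0 := by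
        have := hzle k τ hτ
        linarith
      have hset : {x : ℝ | ∃ (k' : ℕ) (τ' : ℝ),
          τ' ∈ Set.Icc (t k') (t (k' + 1)) ∧ τ' + (k' : ℝ) ≤ τ + (k : ℝ) ∧
          x = v τ' k'} = hcSet t v (τ + (k : ℝ)) := rfl
      rw [hset]
      have h2 : 0 ≤ sSup (hcSet t v (τ + (k:ℝ))) := (hvnn k τ hτ).trans (hVmem k τ hτ)
      exact le_max_of_le_right (h1.trans h2)
end

section
/- Given L, γ > 0, define 𝒯(γ,L) := (1/(L·r₀))·arctan(r₀) if γ > L, 𝒯(γ,L) := 1/L if γ = L, and 𝒯(γ,L) := (1/(L·r₀))·artanh(r₀) if γ < L, where r₀ := √|(γ/L)² − 1|. For c > 1 and λ ∈ (0,1) let r := √|(γ/L)² − c| and define T̃(c,λ,L,γ) := (1/(L·r))·arctan( r(1−λ) / ( 2·(λ/(λ+1))·((γ/L)·((c+1)/2) − 1) + 1 + λ ) ) if L < γ√c; T̃ := (1/L)·(1−λ²)/(λ² + (γ/L)(1+c)λ + 1) if L = γ√c; and T̃ := (1/(L·r))·artanh( r(1−λ) / ( 2·(λ/(λ+1))·((γ/L)·((c+1)/2)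 − 1) + 1 + λ ) ) if L > γ√c. Then for every τ with 0 < τ < 𝒯(γ,L) there exist c > 1 and λ ∈ (0,1) such that T̃(c,λ,L,γ) = τ. -/
/-- Inverse hyperbolic tangent. -/
noncomputable def artanh (x : ℝ) : ℝ := (1 / 2) * Real.log ((1 + x) / (1 - x))

/-- The maximum allowable sampling period `𝒯(γ, L)` of Nešić et al. -/
noncomputable def calT (gam L : ℝ) : ℝ :=
  let r := Real.sqrt |(gam / L) ^ 2 - 1|
  if L < gam then (1 / (L * r)) * Real.arctan r
  else if gam = L then 1 / L
  else (1 / (L * r)) * artanh r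

/-- The time `T̃(c, λ, L, γ)` from Lemma `L:03` of the paper. -/
noncomputable def Ttilde (c lam L gam : ℝ) : ℝ :=
  let r := Real.sqrt |(gam / L) ^ 2 - c|
  if L < gam * Real.sqrt c then
    (1 / (L * r)) * Real.arctan
      (r * (1 - lam) / (2 * (lam / (lam + 1)) * ((gam / L) * ((c + 1) / 2) - 1) + 1 + lam))
  else if L = gam * Real.sqrt c then
    (1 / L) * ((1 - lam ^ 2) / (lam ^ 2 + (gam / L) * (1 + c) * lam + 1))
  else
    (1 / (L * r)) * artanh
      (r * (1 - lam) / (2 * (lam / (lam + 1)) * ((gam / L) * ((c + 1) / 2) - 1) + 1 + lam))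

lemma arctan_lower (r : ℝ) (hr : 0 ≤ r) : r / (1 + r ^ 2) ≤ Real.arctan r := by
  have key : ∀ x : ℝ, HasDerivAt (fun t => Real.arctan t - t / (1 + t ^ 2))
      (2 * x ^ 2 / (1 + x ^ 2) ^ 2) x := by
    intro x
    have h0 : (1 : ℝ) + x ^ 2 ≠ 0 := by positivity
    have h1 := Real.hasDerivAt_arctan x
    have h2 : HasDerivAt (fun t : ℝ => t / (1 + t ^ 2))
        ((1 * (1 + x ^ 2) - x * (0 + ↑2 * x ^ (2 - 1))) / (1 + x ^ 2) ^ 2) x :=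
      (hasDerivAt_id x).div ((hasDerivAt_const x 1).add (hasDerivAt_pow 2 x)) h0
    refine (h1.sub h2).congr_deriv ?_
    norm_num
    field_simp
    ring
  have hmono : Monotone (fun t => Real.arctan t - t / (1 + t ^ 2)) := by
    apply monotone_of_deriv_nonneg
    · exact fun x => (key x).differentiableAt
    · intro x
      rw [(key x).deriv]
      positivity
  have := hmono hr
  simp only [Real.arctan_zero, zero_div, sub_zero, zero_pow] at this
  norm_num at this
  linarith

lemma continuousAt_artanh {x : ℝ} (h1 : -1 < x) (h2 : x < 1) : ContinuousAt artanh x := by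
  have hx1 : (1 : ℝ) - x ≠ 0 := by linarith
  have hpos : 0 < (1 + x) / (1 - x) := div_pos (by linarith) (by linarith)
  have hdiv : ContinuousAt (fun y : ℝ => (1 + y) / (1 - y)) x :=
    (continuousAt_const.add continuousAt_id).div
      (continuousAt_const.sub continuousAt_id) hx1
  have hlog : ContinuousAt (fun y : ℝ => Real.log ((1 + y) / (1 - y))) x :=
    hdiv.log hpos.ne'
  exact continuousAt_const.mul hlog

lemma ivt_branch (L r q τ : ℝ) (hL : 0 < L) (hr : 0 < r) (hq : 0 < q)
    (φ : ℝ → ℝ) (hφ : ContinuousOn φ (Set.Icc 0 r)) (hφ0 : φ 0 = 0)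
    (hτ : 0 < τ) (hτ' : τ < 1 / (L * r) * φ r) :
    ∃ lam : ℝ, 0 < lam ∧ lam < 1 ∧
      1 / (L * r) * φ (r * (1 - lam) / (2 * (lam / (lam + 1)) * (q - 1) + 1 + lam)) = τ := by
  set D : ℝ → ℝ := fun lam => 2 * (lam / (lam + 1)) * (q - 1) + 1 + lam with hDdef
  have hD : ∀ lam ∈ Set.Icc (0 : ℝ) 1, D lam = (lam ^ 2 + 2 * q * lam + 1) / (lam + 1) := by
    intro lam hlam
    have h1 : lam + 1 ≠ 0 := by have := hlam.1; positivity
    simp only [hDdef]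
    field_simp
    ring
  have hDpos : ∀ lam ∈ Set.Icc (0 : ℝ) 1, 0 < D lam := by
    intro lam hlam
    rw [hD lam hlam]
    have h0 := hlam.1
    have h2 : 0 ≤ 2 * q * lam := by positivity
    apply div_pos (by nlinarith [sq_nonneg lam]) (by linarith)
  set x : ℝ → ℝ := fun lam => r * (1 - lam) / D lam with hxdef
  have hmem : ∀ lam ∈ Set.Icc (0 : ℝ) 1, x lam ∈ Set.Icc 0 r := by
    intro lam hlam
    have hDp := hDpos lam hlam
    constructor
    · exact div_nonneg (mul_nonneg hr.le (by linarith [hlam.2])) hDp.le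
    · rw [hxdef]
      simp only
      rw [div_le_iff₀ hDp, hD lam hlam]
      apply mul_le_mul_of_nonneg_left _ hr.le
      rw [le_div_iff₀ (by have := hlam.1; positivity)]
      have h0 := hlam.1
      nlinarith [mul_nonneg (mul_nonneg hq.le h0) h0, sq_nonneg lam]
  have hxcont : ContinuousOn x (Set.Icc 0 1) := by
    apply ContinuousOn.div
    · exact (continuous_const.mul (continuous_const.sub continuous_id)).continuousOn
    · apply ContinuousOn.add
      apply ContinuousOn.add
      · apply ContinuousOn.mul
        apply ContinuousOn.mul continuousOn_const
        · exact ContinuousOn.div continuousOn_id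
            (continuousOn_id.add continuousOn_const)
            (fun lam hlam => by have := hlam.1; show lam + 1 ≠ 0; positivity)
        · exact continuousOn_const
      · exact continuousOn_const
      · exact continuousOn_id
    · exact fun lam hlam => (hDpos lam hlam).ne'
  set F : ℝ → ℝ := fun lam => 1 / (L * r) * φ (x lam) with hFdef
  have hFcont : ContinuousOn F (Set.Icc 0 1) :=
    continuousOn_const.mul (hφ.comp hxcont hmem)
  have hx1 : x 1 = 0 := by simp [hxdef]
  have hx0 : x 0 = r := by norm_num [hxdef, hDdef]
  have hF1 : F 1 = 0 := by rw [hFdef]; simp [hx1, hφ0]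
  have hF0 : F 0 = 1 / (L * r) * φ r := by rw [hFdef]; simp [hx0]
  have := intermediate_value_Ioo' (zero_le_one) hFcont
  have hτmem : τ ∈ Set.Ioo (F 1) (F 0) := by rw [hF1, hF0]; exact ⟨hτ, hτ'⟩
  obtain ⟨lam, hlam, hFlam⟩ := this hτmem
  exact ⟨lam, hlam.1, hlam.2, hFlam⟩

/-- Every sampling period `τ` with `0 < τ < 𝒯(γ, L)` is attained:
there exist `c > 1` and `λ ∈ (0,1)` with `T̃(c,λ,L,γ) = τ`. -/
theorem Ttilde_attains (L gam : ℝ) (hL : 0 < L) (hgam : 0 < gam) :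
    ∀ τ : ℝ, 0 < τ → τ < calT gam L →
      ∃ c lam : ℝ, 1 < c ∧ 0 < lam ∧ lam < 1 ∧ Ttilde c lam L gam = τ := by
  intro τ hτ hτT
  have hLne : L ≠ 0 := hL.ne'
  have hgamne : gam ≠ 0 := hgam.ne'
  set k : ℝ := (gam / L) ^ 2 with hkdef
  have hk0 : 0 < k := by positivity
  rcases lt_trichotomy L gam with hlt | heq | hgt
  · -- arctan case: L < gam
    have hk1 : 1 < k := by
      have h1 : 1 < gam / L := (one_lt_div hL).2 hlt
      nlinarith
    have habs0 : |(gam / L) ^ 2 - 1| = k - 1 := abs_of_nonneg (by linarith)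
    have hcalT : calT gam L = 1 / (L * Real.sqrt (k - 1)) * Real.arctan (Real.sqrt (k - 1)) := by
      simp only [calT, habs0, if_pos hlt]
    rw [hcalT] at hτT
    set G : ℝ → ℝ := fun c => 1 / (L * Real.sqrt (k - c)) * Real.arctan (Real.sqrt (k - c))
      with hGdef
    have hsq : ContinuousAt (fun c : ℝ => Real.sqrt (k - c)) 1 :=
      by fun_prop
    have hsqval : Real.sqrt (k - 1) ≠ 0 := by
      rw [Real.sqrt_ne_zero' ]; linarith
    have hG1 : ContinuousAt G 1 := by
      apply ContinuousAt.mul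
      · exact ContinuousAt.div continuousAt_const (continuousAt_const.mul hsq)
          (mul_ne_zero hLne hsqval)
      · exact ContinuousAt.comp (g := Real.arctan) Real.continuous_arctan.continuousAt hsq
    have hτG1 : τ < G 1 := hτT
    have hev1 : ∀ᶠ c in nhdsWithin (1:ℝ) (Set.Ioi 1), τ < G c :=
      (hG1.continuousWithinAt.tendsto).eventually (eventually_gt_nhds hτG1)
    have hev2 : ∀ᶠ c in nhdsWithin (1:ℝ) (Set.Ioi 1), c ∈ Set.Ioo (1:ℝ) k :=
      Ioo_mem_nhdsGT_of_mem ⟨le_rfl, hk1⟩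
    obtain ⟨c, hτc, hc1, hck⟩ := (hev1.and hev2).exists
    have hc0 : (0:ℝ) < c := by linarith
    set r : ℝ := Real.sqrt (k - c) with hrdef
    have hrpos : 0 < r := Real.sqrt_pos.2 (by linarith)
    have hq : 0 < (gam / L) * ((c + 1) / 2) := mul_pos (div_pos hgam hL) (by linarith)
    obtain ⟨lam, hlam0, hlam1, hlameq⟩ := ivt_branch L r ((gam / L) * ((c + 1) / 2)) τ hL
      hrpos hq Real.arctan Real.continuous_arctan.continuousOn Real.arctan_zero hτ hτc
    refine ⟨c, lam, hc1, hlam0, hlam1, ?_⟩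
    have hsqc : 1 < Real.sqrt c := (Real.lt_sqrt zero_le_one).2 (by nlinarith)
    have hbranch : L < gam * Real.sqrt c := by nlinarith
    have habs : |(gam / L) ^ 2 - c| = k - c := abs_of_nonneg (by linarith)
    simp only [Ttilde, habs, if_pos hbranch]
    exact hlameq
  · -- gam = L case
    have hcalT : calT gam L = 1 / L := by
      simp only [calT, if_neg (by linarith : ¬ L < gam), if_pos heq.symm]
    rw [hcalT] at hτT
    have hLτ : 0 < L * τ := mul_pos hL hτ
    set B : ℝ := 1 / (L * τ) with hBdef
    have hB : 1 < B := by
      rw [hBdef, lt_div_iff₀ hLτ]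
      calc 1 * (L * τ) = L * τ := one_mul _
        _ < L * (1/L) := by exact mul_lt_mul_of_pos_left hτT hL
        _ = 1 := by field_simp
    set c : ℝ := min 2 ((1 + B) / 2) with hcdef
    have hc1 : 1 < c := lt_min (by norm_num) (by linarith)
    have hc0 : (0:ℝ) < c := by linarith
    have hcB : c < B := by
      calc c ≤ (1 + B) / 2 := min_le_right _ _
        _ < B := by linarith
    set r : ℝ := Real.sqrt (c - 1) with hrdef
    have hrpos : 0 < r := Real.sqrt_pos.2 (by linarith)
    have hr2 : r ^ 2 = c - 1 := Real.sq_sqrt (by linarith)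
    have hτ' : τ < 1 / (L * r) * Real.arctan r := by
      have h1 : r / (1 + r ^ 2) ≤ Real.arctan r := arctan_lower r hrpos.le
      have h2 : (1:ℝ) + r ^ 2 = c := by rw [hr2]; ring
      have h3 : 1 / (L * r) * (r / (1 + r ^ 2)) = 1 / (L * c) := by
        rw [h2]; field_simp
      have h4 : τ < 1 / (L * c) := by
        rw [lt_div_iff₀ (mul_pos hL hc0)]
        have h5 : c * (L * τ) < 1 := by
          rw [hBdef] at hcB
          calc c * (L * τ) < (1 / (L * τ)) * (L * τ) := by
                exact mul_lt_mul_of_pos_right hcB hLτ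
            _ = 1 := by field_simp
        nlinarith
      have h6 : 1 / (L * c) ≤ 1 / (L * r) * Real.arctan r := by
        rw [← h3]
        exact mul_le_mul_of_nonneg_left h1 (by positivity)
      linarith
    have hq : 0 < (gam / L) * ((c + 1) / 2) := mul_pos (div_pos hgam hL) (by linarith)
    obtain ⟨lam, hlam0, hlam1, hlameq⟩ := ivt_branch L r ((gam / L) * ((c + 1) / 2)) τ hL
      hrpos hq Real.arctan Real.continuous_arctan.continuousOn Real.arctan_zero hτ hτ'
    refine ⟨c, lam, hc1, hlam0, hlam1, ?_⟩
    have hsqc : 1 < Real.sqrt c := (Real.lt_sqrt zero_le_one).2 (by nlinarith)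
    have hbranch : L < gam * Real.sqrt c := by nlinarith
    have habs : |(gam / L) ^ 2 - c| = c - 1 := by
      have hk : k = 1 := by rw [hkdef, heq]; field_simp
      rw [← hkdef, hk, abs_sub_comm]
      exact abs_of_nonneg (by linarith)
    simp only [Ttilde, habs, if_pos hbranch]
    exact hlameq
  · -- artanh case: gam < L
    have hk1 : k < 1 := by
      have h1 : gam / L < 1 := (div_lt_one hL).2 hgt
      have h0 : 0 < gam / L := div_pos hgam hL
      nlinarith
    have habs0 : |(gam / L) ^ 2 - 1| = 1 - k := by
      rw [← hkdef, abs_sub_comm]; exact abs_of_nonneg (by linarith)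
    have hcalT : calT gam L = 1 / (L * Real.sqrt (1 - k)) * artanh (Real.sqrt (1 - k)) := by
      simp only [calT, habs0, if_neg (by linarith : ¬ L < gam),
        if_neg (by intro h; linarith : ¬ gam = L)]
    rw [hcalT] at hτT
    have hr0pos : 0 < Real.sqrt (1 - k) := Real.sqrt_pos.2 (by linarith)
    have hr01 : Real.sqrt (1 - k) < 1 := by
      have := Real.sqrt_lt_sqrt (by linarith : (0:ℝ) ≤ 1 - k) (by linarith : 1 - k < 1)
      rwa [Real.sqrt_one] at this
    set G : ℝ → ℝ := fun c => 1 / (L * Real.sqrt (c - k)) * artanh (Real.sqrt (c - k))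
      with hGdef
    have hsq : ContinuousAt (fun c : ℝ => Real.sqrt (c - k)) 1 :=
      by fun_prop
    have hG1 : ContinuousAt G 1 := by
      apply ContinuousAt.mul
      · exact ContinuousAt.div continuousAt_const (continuousAt_const.mul hsq)
          (mul_ne_zero hLne hr0pos.ne')
      · exact ContinuousAt.comp (x := (1:ℝ)) (g := artanh)
          (continuousAt_artanh (by linarith) hr01) hsq
    have hτG1 : τ < G 1 := hτT
    have hm : 1 < min (1 + k) (1 / k) := by
      apply lt_min (by linarith)
      rw [lt_div_iff₀ hk0]; linarith
    have hev1 : ∀ᶠ c in nhdsWithin (1:ℝ) (Set.Ioi 1), τ < G c :=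
      (hG1.continuousWithinAt.tendsto).eventually (eventually_gt_nhds hτG1)
    have hev2 : ∀ᶠ c in nhdsWithin (1:ℝ) (Set.Ioi 1),
        c ∈ Set.Ioo (1:ℝ) (min (1 + k) (1 / k)) :=
      Ioo_mem_nhdsGT_of_mem ⟨le_rfl, hm⟩
    obtain ⟨c, hτc, hc1, hcm⟩ := (hev1.and hev2).exists
    have hc0 : (0:ℝ) < c := by linarith
    have hck1 : c < 1 + k := lt_of_lt_of_le hcm (min_le_left _ _)
    have hckinv : c < 1 / k := lt_of_lt_of_le hcm (min_le_right _ _)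
    set r : ℝ := Real.sqrt (c - k) with hrdef
    have hrpos : 0 < r := Real.sqrt_pos.2 (by linarith)
    have hr1 : r < 1 := by
      have := Real.sqrt_lt_sqrt (by linarith : (0:ℝ) ≤ c - k) (by linarith : c - k < 1)
      rwa [Real.sqrt_one] at this
    have hφ : ContinuousOn artanh (Set.Icc 0 r) := fun x hx =>
      (continuousAt_artanh (by linarith [hx.1]) (by linarith [hx.2])).continuousWithinAt
    have hφ0 : artanh 0 = 0 := by simp [artanh]
    have hq : 0 < (gam / L) * ((c + 1) / 2) := mul_pos (div_pos hgam hL) (by linarith)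
    obtain ⟨lam, hlam0, hlam1, hlameq⟩ := ivt_branch L r ((gam / L) * ((c + 1) / 2)) τ hL
      hrpos hq artanh hφ hφ0 hτ hτc
    refine ⟨c, lam, hc1, hlam0, hlam1, ?_⟩
    have hinvk : 1 / k = (L / gam) ^ 2 := by
      rw [hkdef]; field_simp
    have hsqc : Real.sqrt c < L / gam := by
      have h1 : c < (L / gam) ^ 2 := by rw [← hinvk]; exact hckinv
      have h2 := Real.sqrt_lt_sqrt hc0.le h1
      rwa [Real.sqrt_sq (by positivity : (0:ℝ) ≤ L / gam)] at h2
    have hbranch : gam * Real.sqrt c < L := by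
      have := mul_lt_mul_of_pos_left hsqc hgam
      calc gam * Real.sqrt c < gam * (L / gam) := this
        _ = L := by field_simp
    have habs : |(gam / L) ^ 2 - c| = c - k := by
      rw [← hkdef, abs_sub_comm]; exact abs_of_nonneg (by linarith)
    simp only [Ttilde, habs, if_neg (not_lt.2 hbranch.le), if_neg hbranch.ne']
    exact hlameq
end

section
/- Let γ, L > 0, c > 1, λ ∈ (0,1), and ε > 0. Then for all real numbers h ≥ 0, W ≥ 0, s ≥ 0 and all φ with λ ≤ φ ≤ λ⁻¹, the following inequality holds: −h² + γ²W² + 2γφW(LW + h + s) − γ(2Lφ + γ(φ² + c))W² ≤ −(c − 1 − ε)γ²W² + (1/(λ²ε))·s². -/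
/-- The key pointwise estimate in the dissipativity analysis of the sampled-data Lyapunov
function `U(ξ) = V(x) + γ φ(τ) W(e)²`:  for `γ, L > 0`, `c > 1`, `λ ∈ (0,1)`, `ε > 0`,
all `h, W, s ≥ 0` and all `φ ∈ [λ, λ⁻¹]`,
`-h² + γ²W² + 2γφW(LW + h + s) - γ(2Lφ + γ(φ² + c))W² ≤ -(c - 1 - ε)γ²W² + s²/(λ²ε)`. -/
theorem sampled_data_pointwise_estimate (gam L c lam ε h W s φ : ℝ)
    (hgam : 0 < gam) (hL : 0 < L) (hc : 1 < c) (hlam0 : 0 < lam) (hlam1 : lam < 1)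
    (hε : 0 < ε) (hh : 0 ≤ h) (hW : 0 ≤ W) (hs : 0 ≤ s)
    (hφl : lam ≤ φ) (hφu : φ ≤ lam⁻¹) :
    -h ^ 2 + gam ^ 2 * W ^ 2 + 2 * gam * φ * W * (L * W + h + s)
        - gam * (2 * L * φ + gam * (φ ^ 2 + c)) * W ^ 2
      ≤ -(c - 1 - ε) * gam ^ 2 * W ^ 2 + (1 / (lam ^ 2 * ε)) * s ^ 2 := by
  have hφ0 : 0 < φ := lt_of_lt_of_le hlam0 hφl
  have hφu' : φ * lam ≤ 1 := by
    have : φ * lam ≤ lam⁻¹ * lam := by nlinarith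
    rwa [inv_mul_cancel₀ (ne_of_gt hlam0)] at this
  have hsq : φ ^ 2 * lam ^ 2 ≤ 1 := by nlinarith [mul_nonneg hφ0.le hlam0.le]
  have hyoung : 2 * gam * φ * W * s ≤ ε * gam ^ 2 * W ^ 2 + (1 / (lam ^ 2 * ε)) * s ^ 2 := by
    have key : (2 * gam * φ * W * s - ε * gam ^ 2 * W ^ 2) * ε ≤ φ ^ 2 * s ^ 2 := by
      nlinarith [sq_nonneg (ε * gam * W - φ * s)]
    have h1 : 2 * gam * φ * W * s - ε * gam ^ 2 * W ^ 2 ≤ φ ^ 2 * s ^ 2 / ε :=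
      (le_div_iff₀ hε).mpr key
    have h2 : φ ^ 2 * s ^ 2 / ε ≤ (1 / (lam ^ 2 * ε)) * s ^ 2 := by
      rw [div_le_iff₀ hε, one_div, mul_assoc, inv_mul_eq_div,
        le_div_iff₀ (by positivity : (0:ℝ) < lam ^ 2 * ε)]
      nlinarith [mul_nonneg (mul_nonneg (sq_nonneg s) hε.le) (sub_nonneg.mpr hsq)]
    linarith
  nlinarith [sq_nonneg (h - gam * φ * W), hyoung]
end

section
/- Let λ be a class-K function, let q : ℝ≥0 → (0, +∞) be a continuous function with q(s) = 1 for all s ∈ [0,1], let α₁ be a class-K∞ function, and set c := λ(1). Then there exists a class-K function θ such that c + θ(α₁(s)) ≥ λ(1/q(s)) for all s ≥ 0. -/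
open Set MeasureTheory intervalIntegral

/-- The domination claim (eq. (99) of the paper): for a class-K function `λ`, a continuous
positive function `q` with `q ≡ 1` on `[0,1]`, a class-K∞ function `α₁`, and `c := λ(1)`,
there exists a class-K function `θ` with `c + θ(α₁ s) ≥ λ(1 / q s)` for all `s ≥ 0`. -/
theorem domination_theta (lam q α₁ : ℝ → ℝ)
    (hlam : ClassK lam)
    (hq : ContinuousOn q (Set.Ici 0)) (hqpos : ∀ s ≥ (0:ℝ), 0 < q s)
    (hq1 : ∀ s ∈ Set.Icc (0:ℝ) 1, q s = 1)
    (hα₁ : ClassKInf α₁) :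
    ∃ θ : ℝ → ℝ, ClassK θ ∧ ∀ s ≥ (0:ℝ), lam (1 / q s) ≤ lam 1 + θ (α₁ s) := by
  obtain ⟨⟨hlamc, hlam0, hlampos⟩, hlammono⟩ := hlam
  obtain ⟨⟨⟨hαc, hα0, hαpos⟩, hαmono⟩, hαtop⟩ := hα₁
  set ψ : ℝ → ℝ := fun s => lam (1 / q s) - lam 1 with hψdef
  set a : ℝ := α₁ 1 with hadef
  have ha : 0 < a := by
    have := hαmono (le_refl (0:ℝ)) (mem_Ici.mpr zero_le_one) zero_lt_one
    rwa [hα0] at this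
  -- the "running sup" N
  set S : ℝ → Set ℝ := fun r => insert 0 (ψ '' {s | 0 ≤ s ∧ α₁ s ≤ r}) with hSdef
  set N : ℝ → ℝ := fun r => sSup (S r) with hNdef
  have hSne : ∀ r, (S r).Nonempty := fun r => ⟨0, mem_insert _ _⟩
  have hψcont : ContinuousOn ψ (Ici 0) := by
    apply ContinuousOn.sub _ continuousOn_const
    apply hlamc.comp (continuousOn_const.div hq fun s hs => (hqpos s hs).ne')
    intro s hs
    exact le_of_lt (div_pos one_pos (hqpos s hs))
  have hbdd : ∀ r, BddAbove (S r) := by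
    intro r
    obtain ⟨M, hM⟩ := (hαtop.eventually_gt_atTop r).exists_forall_of_atTop
    have hcomp : IsCompact (ψ '' Icc 0 (max M 0)) :=
      (isCompact_Icc.image_of_continuousOn (hψcont.mono (fun x hx => hx.1)))
    apply (hcomp.bddAbove.insert 0).mono
    apply insert_subset_insert
    apply image_mono
    rintro s ⟨hs0, hsr⟩
    refine ⟨hs0, le_max_iff.mpr (Or.inl ?_)⟩
    by_contra h
    exact absurd hsr (not_le.mpr (hM s (le_of_not_ge h)))
  have hNmono : Monotone N := by
    intro r r' h
    apply csSup_le_csSup (hbdd r') (hSne r)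
    exact insert_subset_insert (image_mono (fun s hs => ⟨hs.1, hs.2.trans h⟩))
  have hN0 : ∀ r, 0 ≤ N r := fun r => le_csSup (hbdd r) (mem_insert _ _)
  have hNzero : ∀ r ≤ a, N r = 0 := by
    intro r hr
    refine le_antisymm (csSup_le (hSne r) ?_) (hN0 r)
    rintro x (rfl | ⟨s, ⟨hs0, hsr⟩, rfl⟩)
    · exact le_refl 0
    · have hs1 : s ≤ 1 := by
        by_contra h
        have := hαmono (mem_Ici.mpr zero_le_one) (mem_Ici.mpr (le_trans zero_le_one (le_of_lt (not_le.mp h)))) (not_le.mp h)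
        linarith [hsr.trans hr]
      have : q s = 1 := hq1 s ⟨hs0, hs1⟩
      simp [hψdef, this]
  have hNψ : ∀ s ≥ (0:ℝ), ψ s ≤ N (α₁ s) := fun s hs =>
    le_csSup (hbdd _) (Or.inr ⟨s, ⟨hs, le_refl _⟩, rfl⟩)
  have hNint : ∀ u v : ℝ, IntervalIntegrable N volume u v := fun u v =>
    hNmono.intervalIntegrable
  set F : ℝ → ℝ := fun x => ∫ t in (0:ℝ)..x, N t with hFdef
  have hFcont : Continuous F := continuous_primitive hNint 0
  have hFadd : ∀ u v : ℝ, F v - F u = ∫ t in u..v, N t := by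
    intro u v
    have := integral_add_adjacent_intervals (hNint 0 u) (hNint u v)
    simp only [hFdef]
    linarith [this]
  set θ : ℝ → ℝ := fun r => r + (F (r + a) - F r) / a with hθdef
  have hθcont : Continuous θ := by
    apply continuous_id.add
    exact ((hFcont.comp (continuous_id.add continuous_const)).sub hFcont).div_const a
  have hDN : ∀ r, N r ≤ (F (r + a) - F r) / a := by
    intro r
    rw [hFadd, le_div_iff₀ ha]
    have : ∫ t in r..(r + a), (fun _ => N r) t ≤ ∫ t in r..(r + a), N t :=
      integral_mono_on (by linarith) intervalIntegrable_const (hNint _ _)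
        (fun t ht => hNmono ht.1)
    simpa [mul_comm] using this
  have hDmono : Monotone (fun r => F (r + a) - F r) := by
    intro r r' h
    have h1 : F (r' + a) - F (r + a) = ∫ t in r..r', N (t + a) := by
      rw [hFadd, intervalIntegral.integral_comp_add_right]
    have h2 : F r' - F r = ∫ t in r..r', N t := hFadd r r'
    have h3 : ∫ t in r..r', N t ≤ ∫ t in r..r', N (t + a) := by
      apply integral_mono_on h (hNint _ _)
      · exact ((hNmono.comp (fun x y hxy => by simpa using hxy : Monotone (· + a))).intervalIntegrable)
      · exact fun t _ => hNmono (by linarith)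
    dsimp only
    linarith
  refine ⟨θ, ⟨⟨hθcont.continuousOn, ?_, ?_⟩, ?_⟩, ?_⟩
  · -- θ 0 = 0
    have : F a - F 0 = 0 := by
      rw [hFadd]
      have heq : ∫ t in (0:ℝ)..a, N t = ∫ t in (0:ℝ)..a, (0:ℝ) := by
        apply integral_congr
        intro t ht
        rw [uIcc_of_le ha.le] at ht
        exact hNzero t ht.2
      simp [heq]
    simp [hθdef, this]
  · -- positivity
    intro s hs
    have := (hN0 s).trans (hDN s)
    simp only [hθdef]
    linarith
  · -- strict mono
    intro r _ r' _ h
    have hD := (div_le_div_iff_of_pos_right ha).mpr (hDmono h.le)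
    simp only [hθdef]
    dsimp only at hD
    linarith
  · -- final inequality
    intro s hs
    have hr0 : (0:ℝ) ≤ α₁ s := by
      have := hαmono.monotoneOn (le_refl (0:ℝ)) hs hs
      rwa [hα0] at this
    have h1 := hNψ s hs
    have h2 := hDN (α₁ s)
    simp only [hθdef, hψdef] at *
    linarith
end
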